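/- arXiv:0808.1060 — 8 statements merged into one kernel-verified Lean document; each statement's English description precedes it below -/
import Mathlib

section
/- Let J_1, …, J_N be nonempty subsets of Fin n, for each i let p(i) be the number of j with i ∈ J_j, and let p = min_i p(i) ≥ 1. For every real q > p there exist dimensions d : Fin n → ℕ with d i ≥ 1 such that, taking H_j = 0 for each j, Tr exp(Σ_{j=1}^N φ_{J_j}(0)) > Π_{j=1}^N (Tr exp(q • 0))^{1/q}; equivalently, Π_{i} (d i) > Π_{i} (d i)^{p(i)/q}. Hence the inequality of the tensor-product generalized Young inequality fails for every exponent q > p. -/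
open scoped Classical

/-- The embedding `φ_J` of a matrix on `X_J = Π_{i ∈ J} Fin (d i)` into a matrix on
`X = Π_i Fin (d i)`, acting as the identity on the complementary factors. -/
noncomputable def emb {n : ℕ} (d : Fin n → ℕ) (J : Finset (Fin n))
    (H : Matrix (∀ i : J, Fin (d i)) (∀ i : J, Fin (d i)) ℂ) :
    Matrix (∀ i, Fin (d i)) (∀ i, Fin (d i)) ℂ :=
  fun x y => if (∀ i, i ∉ J → x i = y i) then H (fun i => x i) (fun i => y i) else 0

lemma emb_zero {n : ℕ} (d : Fin n → ℕ) (J : Finset (Fin n)) :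
    emb d J (0 : Matrix (∀ i : J, Fin (d i)) (∀ i : J, Fin (d i)) ℂ) = 0 := by
  funext x y
  unfold emb
  split <;> rfl

lemma trace_exp_zero_re {X : Type*} [Fintype X] [DecidableEq X] :
    (NormedSpace.exp (0 : Matrix X X ℂ)).trace.re = Fintype.card X := by
  rw [NormedSpace.exp_zero, Matrix.trace_one]
  simp

/-- Failure of the tensor-product generalized Young inequality for any exponent `q > p`:
for every real `q > p` there are dimensions `d` such that, taking all `H_j = 0`,
`Tr exp (Σ_j φ_{J_j}(0)) > Π_j (Tr exp (q • 0))^{1/q}`; equivalently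
`Π_i d i > Π_i (d i)^{p(i)/q}`. -/
theorem tensor_product_generalized_young_fails_for_large_exponent {n N : ℕ} (hn : 1 ≤ n)
    (J : Fin N → Finset (Fin n)) (hJ : ∀ j, (J j).Nonempty)
    (p : ℕ)
    (hmin : ∀ i : Fin n, p ≤ (Finset.univ.filter (fun j => i ∈ J j)).card)
    (hattain : ∃ i : Fin n, p = (Finset.univ.filter (fun j => i ∈ J j)).card)
    (hp1 : 1 ≤ p)
    (q : ℝ) (hq : (p : ℝ) < q) :
    ∃ d : Fin n → ℕ, (∀ i, 1 ≤ d i) ∧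
      ((NormedSpace.exp
          (∑ j, emb d (J j) (0 : Matrix (∀ i : J j, Fin (d i)) (∀ i : J j, Fin (d i)) ℂ))).trace.re >
        ∏ j, ((NormedSpace.exp
          (q • (0 : Matrix (∀ i : J j, Fin (d i)) (∀ i : J j, Fin (d i)) ℂ))).trace.re) ^ (1 / q)) ∧
      ((∏ i, (d i : ℝ)) >
        ∏ i, (d i : ℝ) ^ (((Finset.univ.filter (fun j => i ∈ J j)).card : ℝ) / q)) := by
  obtain ⟨i₀, hi₀⟩ := hattain
  set d : Fin n → ℕ := fun i => if i = i₀ then 2 else 1 with hd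
  have hd1 : ∀ i, 1 ≤ d i := by
    intro i; simp only [hd]; split <;> norm_num
  refine ⟨d, hd1, ?_, ?_⟩
  · -- trace inequality
    have hsum : (∑ j, emb d (J j)
        (0 : Matrix (∀ i : J j, Fin (d i)) (∀ i : J j, Fin (d i)) ℂ)) = 0 := by
      simp [emb_zero]
    rw [hsum, trace_exp_zero_re]
    have hcardX : (Fintype.card (∀ i, Fin (d i)) : ℝ) = 2 := by
      rw [Fintype.card_pi]
      simp only [Fintype.card_fin]
      push_cast
      rw [show (fun i => ((d i : ℕ) : ℝ)) = fun i => if i = i₀ then (2:ℝ) else 1 by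
        funext i; simp [hd]]
      rw [Finset.prod_ite_eq' Finset.univ i₀ (fun _ => (2:ℝ))]
      simp
    have hfac : ∀ j, ((NormedSpace.exp
          (q • (0 : Matrix (∀ i : J j, Fin (d i)) (∀ i : J j, Fin (d i)) ℂ))).trace.re)
        = if i₀ ∈ J j then (2:ℝ) else 1 := by
      intro j
      rw [smul_zero, trace_exp_zero_re, Fintype.card_pi]
      simp only [Fintype.card_fin]
      push_cast
      rw [show (fun i : (J j : Finset (Fin n)) => ((d i : ℕ) : ℝ))
          = fun i : (J j : Finset (Fin n)) => if (i : Fin n) = i₀ then (2:ℝ) else 1 by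
        funext i; simp [hd]]
      rw [Finset.prod_coe_sort (J j) (fun i => if i = i₀ then (2:ℝ) else 1)]
      rw [Finset.prod_ite_eq' (J j) i₀ (fun _ => (2:ℝ))]
    have hprod : (∏ j, ((NormedSpace.exp
          (q • (0 : Matrix (∀ i : J j, Fin (d i)) (∀ i : J j, Fin (d i)) ℂ))).trace.re) ^ (1 / q))
        = (2:ℝ) ^ ((p : ℝ) / q) := by
      simp_rw [hfac]
      have : ∀ j : Fin N, (if i₀ ∈ J j then (2:ℝ) else 1) ^ (1/q)
          = if i₀ ∈ J j then (2:ℝ) ^ (1/q) else 1 := by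
        intro j; split <;> simp
      simp_rw [this]
      rw [Finset.prod_ite]
      simp only [Finset.prod_const, Finset.prod_const_one, mul_one]
      rw [← Real.rpow_natCast ((2:ℝ) ^ (1/q)), ← Real.rpow_mul (by norm_num)]
      rw [← hi₀]
      ring_nf
    rw [hprod, hcardX]
    have hq0 : 0 < q := lt_of_le_of_lt (by positivity) hq
    have : (p : ℝ) / q < 1 := by
      rw [div_lt_one hq0]; exact hq
    calc (2:ℝ) ^ ((p:ℝ)/q) < 2 ^ (1:ℝ) :=
          Real.rpow_lt_rpow_of_exponent_lt (by norm_num) this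
      _ = 2 := by norm_num
  · -- dimension inequality
    have hL : (∏ i, (d i : ℝ)) = 2 := by
      rw [show (fun i => ((d i : ℕ) : ℝ)) = fun i => if i = i₀ then (2:ℝ) else 1 by
        funext i; simp [hd]]
      rw [Finset.prod_ite_eq' Finset.univ i₀ (fun _ => (2:ℝ))]
      simp
    have hR : (∏ i, (d i : ℝ) ^ (((Finset.univ.filter (fun j => i ∈ J j)).card : ℝ) / q))
        = (2:ℝ) ^ ((p:ℝ)/q) := by
      rw [Finset.prod_eq_single i₀]
      · rw [← hi₀]; simp [hd]
      · intro i _ hi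
        have : d i = 1 := by simp [hd, hi]
        rw [this]; simp
      · simp
    rw [hL, hR]
    have hq0 : 0 < q := lt_of_le_of_lt (by positivity) hq
    have : (p : ℝ) / q < 1 := by
      rw [div_lt_one hq0]; exact hq
    calc (2:ℝ) ^ ((p:ℝ)/q) < 2 ^ (1:ℝ) :=
          Real.rpow_lt_rpow_of_exponent_lt (by norm_num) this
      _ = 2 := by norm_num
end

section
/- Let φ_j : Matrix (Fin m_j) ℂ → Matrix (Fin m) ℂ (j = 1,…,N) be unital star-algebra homomorphisms, let p_1,…,p_N ∈ [1,∞), and let C > 0. Suppose the non-commutative Brascamp–Lieb inequality holds: for all Hermitian H_j ∈ Matrix (Fin m_j) ℂ, Tr exp(Σ_{j=1}^N φ_j(H_j)) ≤ C · Π_{j=1}^N (Tr exp(p_j • H_j))^{1/p_j}. Then for every density matrix ρ ∈ Matrix (Fin m) ℂ and all density matrices ρ_j ∈ Matrix (Fin m_j) ℂ satisfying Tr(ρ_j A) = Tr(ρ · φ_j(A)) for all A ∈ Matrix (Fin m_j) ℂ, one has Σ_{j=1}^N (1/p_j) S(ρ_j) ≥ S(ρ) − log C. -/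
open scoped Classical ComplexOrder

/-- The von Neumann entropy `S(ρ) = -Tr(ρ log ρ)` of a Hermitian matrix, computed via the
eigenvalues (with the convention `0 · log 0 = 0`, since `Real.log 0 = 0`). -/
noncomputable def vNEntropy {X : Type*} [Fintype X] [DecidableEq X] (ρ : Matrix X X ℂ) : ℝ :=
  if h : ρ.IsHermitian then -∑ i, (h.eigenvalues i) * Real.log (h.eigenvalues i) else 0

open Matrix

section Aux

variable {n : Type*} [Fintype n] [DecidableEq n]

lemma klein_point {c l mu Z : ℝ} (hc : 0 ≤ c) (hl : 0 ≤ l) (hZ : 0 < Z) :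
    c * l - c * Real.exp mu / Z ≤ c * l * (Real.log l + Real.log Z - mu) := by
  rcases eq_or_lt_of_le hl with h0 | hl
  · have : 0 ≤ c * Real.exp mu / Z := by positivity
    simp [← h0]
    linarith
  rcases eq_or_lt_of_le hc with hc0 | hc
  · simp [← hc0]
  have hlog : Real.log (Real.exp mu / Z / l) ≤ Real.exp mu / Z / l - 1 :=
    Real.log_le_sub_one_of_pos (by positivity)
  rw [Real.log_div (by positivity) hl.ne', Real.log_div (Real.exp_pos mu).ne' hZ.ne',
    Real.log_exp] at hlog
  have h4 := mul_le_mul_of_nonneg_left hlog (le_of_lt (mul_pos hc hl))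
  have h3 : c * l * (Real.exp mu / Z / l - 1) = c * Real.exp mu / Z - c * l := by
    field_simp
  rw [h3] at h4
  linarith [h4, show c * l * (Real.log l + Real.log Z - mu)
    = -(c * l * (mu - Real.log Z - Real.log l)) from by ring]

lemma gibbs_core (l mu : n → ℝ) (c : n → n → ℝ)
    (hl : ∀ i, 0 ≤ l i) (hs : ∑ i, l i = 1) (hc : ∀ i j, 0 ≤ c i j)
    (hrow : ∀ i, ∑ j, c i j = 1) (hcol : ∀ j, ∑ i, c i j = 1) :
    (-∑ i, l i * Real.log (l i)) + ∑ i, ∑ j, c i j * (l i * mu j) ≤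
      Real.log (∑ j, Real.exp (mu j)) := by
  have hne : Nonempty n := by
    by_contra h
    rw [not_nonempty_iff] at h
    simp [Finset.univ_eq_empty] at hs
  set Z := ∑ j, Real.exp (mu j) with hZdef
  have hZ : 0 < Z := Finset.sum_pos (fun j _ => Real.exp_pos _) Finset.univ_nonempty
  have key : ∑ i, ∑ j, (c i j * l i - c i j * Real.exp (mu j) / Z)
      ≤ ∑ i, ∑ j, c i j * l i * (Real.log (l i) + Real.log Z - mu j) :=
    Finset.sum_le_sum (fun i _ => Finset.sum_le_sum (fun j _ => klein_point (hc i j) (hl i) hZ))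
  have hL : (∑ i, ∑ j, (c i j * l i - c i j * Real.exp (mu j) / Z)) = 0 := by
    have e1 : ∀ i, ∑ j, (c i j * l i - c i j * Real.exp (mu j) / Z)
        = l i - ∑ j, c i j * Real.exp (mu j) / Z := by
      intro i
      rw [Finset.sum_sub_distrib, ← Finset.sum_mul, hrow i, one_mul]
    rw [Finset.sum_congr rfl (fun i _ => e1 i), Finset.sum_sub_distrib, hs, Finset.sum_comm]
    have e2 : ∀ j, ∑ i, c i j * Real.exp (mu j) / Z = Real.exp (mu j) / Z := by
      intro j
      rw [← Finset.sum_div, ← Finset.sum_mul, hcol j, one_mul]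
    rw [Finset.sum_congr rfl (fun j _ => e2 j), ← Finset.sum_div, ← hZdef, div_self hZ.ne']
    ring
  have hR : ∑ i, ∑ j, c i j * l i * (Real.log (l i) + Real.log Z - mu j)
      = (∑ i, l i * Real.log (l i)) + Real.log Z - ∑ i, ∑ j, c i j * (l i * mu j) := by
    have e1 : ∀ i, ∑ j, c i j * l i * (Real.log (l i) + Real.log Z - mu j)
        = l i * Real.log (l i) + l i * Real.log Z - ∑ j, c i j * (l i * mu j) := by
      intro i
      have e0 : ∀ j, c i j * l i * (Real.log (l i) + Real.log Z - mu j)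
          = (c i j * (l i * Real.log (l i)) + c i j * (l i * Real.log Z)) - c i j * (l i * mu j) :=
        fun j => by ring
      rw [Finset.sum_congr rfl fun j _ => e0 j, Finset.sum_sub_distrib, Finset.sum_add_distrib,
        ← Finset.sum_mul, ← Finset.sum_mul, hrow i, one_mul, one_mul]
    rw [Finset.sum_congr rfl fun i _ => e1 i, Finset.sum_sub_distrib, Finset.sum_add_distrib,
      ← Finset.sum_mul, hs, one_mul]
  rw [hL, hR] at key
  linarith

lemma trace_conj_unitary (U : unitaryGroup n ℂ) (A : Matrix n n ℂ) :
    ((U : Matrix n n ℂ) * A * star (U : Matrix n n ℂ)).trace = A.trace := by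
  rw [Matrix.trace_mul_cycle, U.2.1, Matrix.one_mul]

lemma exp_conj_unitary (U : unitaryGroup n ℂ) (A : Matrix n n ℂ) :
    NormedSpace.exp ((U : Matrix n n ℂ) * A * star (U : Matrix n n ℂ))
      = (U : Matrix n n ℂ) * NormedSpace.exp A * star (U : Matrix n n ℂ) := by
  have h := Matrix.exp_conj (U : Matrix n n ℂ) A (Unitary.toUnits U).isUnit
  rwa [Matrix.inv_eq_left_inv U.2.1] at h

lemma trace_exp_unitary_conj_diag (U : unitaryGroup n ℂ) (d : n → ℝ) :
    (NormedSpace.exp ((U : Matrix n n ℂ) * diagonal (fun i => (d i : ℂ))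
        * star (U : Matrix n n ℂ))).trace = ∑ i, (Real.exp (d i) : ℂ) := by
  rw [exp_conj_unitary, trace_conj_unitary, Matrix.exp_diagonal, Pi.exp_def, trace_diagonal]
  simp [← Complex.exp_eq_exp_ℂ, ← Complex.ofReal_exp]

lemma isHermitian_conj_diag (U : unitaryGroup n ℂ) (d : n → ℝ) :
    ((U : Matrix n n ℂ) * diagonal (fun i => (d i : ℂ))
        * star (U : Matrix n n ℂ)).IsHermitian := by
  rw [Matrix.star_eq_conjTranspose]
  apply Matrix.isHermitian_mul_mul_conjTranspose
  rw [Matrix.IsHermitian, Matrix.diagonal_conjTranspose]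
  norm_num

lemma trace_conj_mul_conj (U V : unitaryGroup n ℂ) (A B : Matrix n n ℂ) :
    (((U : Matrix n n ℂ) * A * star (U : Matrix n n ℂ))
        * ((V : Matrix n n ℂ) * B * star (V : Matrix n n ℂ))).trace
      = (A * (star (U : Matrix n n ℂ) * (V : Matrix n n ℂ)) * B
        * (star (V : Matrix n n ℂ) * (U : Matrix n n ℂ))).trace := by
  have h : ((U : Matrix n n ℂ) * A * star (U : Matrix n n ℂ))
        * ((V : Matrix n n ℂ) * B * star (V : Matrix n n ℂ))
      = (U : Matrix n n ℂ) * (A * (star (U : Matrix n n ℂ) * (V : Matrix n n ℂ)) * B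
        * (star (V : Matrix n n ℂ) * (U : Matrix n n ℂ))) * star (U : Matrix n n ℂ) := by
    simp only [Matrix.mul_assoc]
    rw [show (U : Matrix n n ℂ) * star (U : Matrix n n ℂ) = 1 from U.2.2, Matrix.mul_one]
  rw [h, trace_conj_unitary]

lemma trace_diag_sandwich (a b : n → ℝ) (W : Matrix n n ℂ) :
    (diagonal (fun i => (a i : ℂ)) * W * diagonal (fun j => (b j : ℂ)) * star W).trace
      = ∑ i, ∑ j, ((a i * b j * Complex.normSq (W i j) : ℝ) : ℂ) := by
  have h1 : diagonal (fun i => (a i : ℂ)) * W * diagonal (fun j => (b j : ℂ))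
      = Matrix.of (fun i j => (a i : ℂ) * W i j * (b j : ℂ)) := by
    ext i j
    simp [Matrix.diagonal_mul, Matrix.mul_diagonal]
  rw [h1, Matrix.trace]
  simp only [Matrix.diag_apply, Matrix.mul_apply, Matrix.star_apply, Matrix.of_apply]
  refine Finset.sum_congr rfl fun i _ => Finset.sum_congr rfl fun j _ => ?_
  rw [show (a i : ℂ) * W i j * (b j : ℂ) * star (W i j)
      = (a i : ℂ) * (b j : ℂ) * (W i j * star (W i j)) from by ring]
  rw [show star (W i j) = starRingEnd ℂ (W i j) from rfl, Complex.mul_conj]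
  push_cast
  ring

lemma spectral' {A : Matrix n n ℂ} (hA : A.IsHermitian) :
    A = (hA.eigenvectorUnitary : Matrix n n ℂ) * diagonal (fun i => (hA.eigenvalues i : ℂ))
      * star (hA.eigenvectorUnitary : Matrix n n ℂ) := by
  conv_lhs => rw [hA.spectral_theorem]
  rfl

lemma sum_eigenvalues_eq_one {A : Matrix n n ℂ} (hA : A.IsHermitian) (h1 : A.trace = 1) :
    ∑ i, hA.eigenvalues i = 1 := by
  have h := h1
  rw [spectral' hA, trace_conj_unitary, trace_diagonal, ← Complex.ofReal_sum] at h
  exact_mod_cast h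

lemma gibbs_matrix (ρ K : Matrix n n ℂ) (hρ : ρ.PosSemidef) (h1 : ρ.trace = 1)
    (hK : K.IsHermitian) :
    vNEntropy ρ + (ρ * K).trace.re ≤ Real.log ((NormedSpace.exp K).trace.re) := by
  set W : unitaryGroup n ℂ := star hρ.1.eigenvectorUnitary * hK.eigenvectorUnitary with hWdef
  have hWc : (W : Matrix n n ℂ)
      = star (hρ.1.eigenvectorUnitary : Matrix n n ℂ) * (hK.eigenvectorUnitary : Matrix n n ℂ) :=
    rfl
  set c : n → n → ℝ := fun i j => Complex.normSq ((W : Matrix n n ℂ) i j) with hcdef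
  have hrow : ∀ i, ∑ j, c i j = 1 := by
    intro i
    have h := congrFun (congrFun (congrArg (fun M : Matrix n n ℂ => M) W.2.2) i) i
    simp only [Matrix.mul_apply, Matrix.star_apply, Matrix.one_apply_eq] at h
    have : ∀ j, (W : Matrix n n ℂ) i j * star ((W : Matrix n n ℂ) i j)
        = ((c i j : ℝ) : ℂ) := by
      intro j
      rw [show star ((W : Matrix n n ℂ) i j) = starRingEnd ℂ ((W : Matrix n n ℂ) i j) from rfl,
        Complex.mul_conj]
    rw [Finset.sum_congr rfl fun j _ => this j, ← Complex.ofReal_sum] at h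
    exact_mod_cast h
  have hcol : ∀ j, ∑ i, c i j = 1 := by
    intro j
    have h := congrFun (congrFun (congrArg (fun M : Matrix n n ℂ => M) W.2.1) j) j
    simp only [Matrix.mul_apply, Matrix.star_apply, Matrix.one_apply_eq] at h
    have : ∀ i, star ((W : Matrix n n ℂ) i j) * (W : Matrix n n ℂ) i j
        = ((c i j : ℝ) : ℂ) := by
      intro i
      rw [show star ((W : Matrix n n ℂ) i j) = starRingEnd ℂ ((W : Matrix n n ℂ) i j) from rfl,
        mul_comm, Complex.mul_conj]
    rw [Finset.sum_congr rfl fun i _ => this i, ← Complex.ofReal_sum] at h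
    exact_mod_cast h
  have htr : (ρ * K).trace.re
      = ∑ i, ∑ j, c i j * (hρ.1.eigenvalues i * hK.eigenvalues j) := by
    conv_lhs => rw [spectral' hρ.1, spectral' hK]
    rw [trace_conj_mul_conj]
    have hsW : (star (hK.eigenvectorUnitary : Matrix n n ℂ)
        * (hρ.1.eigenvectorUnitary : Matrix n n ℂ)) = star (W : Matrix n n ℂ) := by
      rw [hWc, StarMul.star_mul, star_star]
    rw [hsW, ← hWc, trace_diag_sandwich]
    rw [show (∑ i, ∑ j, ((hρ.1.eigenvalues i * hK.eigenvalues j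
          * Complex.normSq ((W : Matrix n n ℂ) i j) : ℝ) : ℂ))
        = ((∑ i, ∑ j, hρ.1.eigenvalues i * hK.eigenvalues j
          * Complex.normSq ((W : Matrix n n ℂ) i j) : ℝ) : ℂ) from by push_cast; rfl,
      Complex.ofReal_re]
    refine Finset.sum_congr rfl fun i _ => Finset.sum_congr rfl fun j _ => ?_
    simp only [hcdef]
    ring
  have htrexp : (NormedSpace.exp K).trace.re = ∑ j, Real.exp (hK.eigenvalues j) := by
    conv_lhs => rw [spectral' hK]
    rw [trace_exp_unitary_conj_diag, ← Complex.ofReal_sum, Complex.ofReal_re]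
  have hvn : vNEntropy ρ = -∑ i, hρ.1.eigenvalues i * Real.log (hρ.1.eigenvalues i) := by
    simp only [vNEntropy]
    rw [dif_pos hρ.1]
  rw [hvn, htr, htrexp]
  exact gibbs_core hρ.1.eigenvalues hK.eigenvalues c hρ.eigenvalues_nonneg
    (sum_eigenvalues_eq_one hρ.1 h1) (fun i j => Complex.normSq_nonneg _) hrow hcol

lemma trace_conj_diag_mul_conj_diag (V : unitaryGroup n ℂ) (v w : n → ℂ) :
    (((V : Matrix n n ℂ) * diagonal v * star (V : Matrix n n ℂ))
      * ((V : Matrix n n ℂ) * diagonal w * star (V : Matrix n n ℂ))).trace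
      = ∑ k, v k * w k := by
  rw [trace_conj_mul_conj V V, V.2.1, Matrix.mul_one, Matrix.mul_one,
    Matrix.diagonal_mul_diagonal, trace_diagonal]

lemma smul_conj_diag (V : unitaryGroup n ℂ) (d : n → ℝ) (r : ℝ) :
    r • ((V : Matrix n n ℂ) * diagonal (fun i => (d i : ℂ)) * star (V : Matrix n n ℂ))
      = (V : Matrix n n ℂ) * diagonal (fun i => ((r * d i : ℝ) : ℂ))
        * star (V : Matrix n n ℂ) := by
  rw [← Matrix.smul_mul, ← Matrix.mul_smul]
  congr 1
  congr 1
  ext i k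
  by_cases h : i = k <;> simp [Matrix.diagonal_apply, h, Complex.real_smul]


end Aux

/-- If the non-commutative Brascamp–Lieb inequality
`Tr exp (Σ_j φ_j(H_j)) ≤ C · Π_j (Tr exp (p_j • H_j))^{1/p_j}` holds for all Hermitian `H_j`,
then the generalized subadditivity of entropy
`Σ_j (1/p_j) S(ρ_j) ≥ S(ρ) - log C` holds for every density matrix `ρ` with marginals `ρ_j`. -/
theorem subadditivity_of_entropy_of_brascamp_lieb {N m : ℕ} (mj : Fin N → ℕ)
    (φ : ∀ j, Matrix (Fin (mj j)) (Fin (mj j)) ℂ →⋆ₐ[ℂ] Matrix (Fin m) (Fin m) ℂ)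
    (p : Fin N → ℝ) (hp : ∀ j, 1 ≤ p j) (C : ℝ) (hC : 0 < C)
    (hBL : ∀ H : ∀ j, Matrix (Fin (mj j)) (Fin (mj j)) ℂ, (∀ j, (H j).IsHermitian) →
      (NormedSpace.exp (∑ j, φ j (H j))).trace.re ≤
        C * ∏ j, ((NormedSpace.exp (p j • H j)).trace.re) ^ (1 / p j))
    (ρ : Matrix (Fin m) (Fin m) ℂ) (hρ : ρ.PosSemidef) (hρ1 : ρ.trace = 1)
    (ρj : ∀ j, Matrix (Fin (mj j)) (Fin (mj j)) ℂ)
    (hρj : ∀ j, (ρj j).PosSemidef) (hρj1 : ∀ j, (ρj j).trace = 1)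
    (hmarg : ∀ j, ∀ A : Matrix (Fin (mj j)) (Fin (mj j)) ℂ,
      (ρj j * A).trace = (ρ * φ j A).trace) :
    ∑ j, (1 / p j) * vNEntropy (ρj j) ≥ vNEntropy ρ - Real.log C := by
  have hp0 : ∀ j, 0 < p j := fun j => lt_of_lt_of_le one_pos (hp j)
  have hm : 0 < m := by
    rcases Nat.eq_zero_or_pos m with h | h
    · subst h
      simp [Matrix.trace] at hρ1
    · exact h
  have hmfin : Nonempty (Fin m) := ⟨⟨0, hm⟩⟩
  set M : ℝ := ∑ j, (mj j : ℝ) with hMdef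
  have hM0 : 0 ≤ M := Finset.sum_nonneg (fun j _ => by positivity)
  have key : ∀ ε : ℝ, 0 < ε →
      vNEntropy ρ - Real.log C ≤ (∑ j, (1 / p j) * vNEntropy (ρj j)) + ε * M := by
    intro ε hε
    set l : ∀ j, Fin (mj j) → ℝ := fun j => (hρj j).1.eigenvalues with hldef
    have hl0 : ∀ j k, 0 ≤ l j k := fun j k => (hρj j).eigenvalues_nonneg k
    have hls : ∀ j, ∑ k, l j k = 1 := fun j => sum_eigenvalues_eq_one (hρj j).1 (hρj1 j)
    set d : ∀ j, Fin (mj j) → ℝ := fun j k => (1 / p j) * Real.log (l j k + ε) with hddef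
    set H : ∀ j, Matrix (Fin (mj j)) (Fin (mj j)) ℂ := fun j =>
      ((hρj j).1.eigenvectorUnitary : Matrix (Fin (mj j)) (Fin (mj j)) ℂ)
        * diagonal (fun k => ((d j k : ℝ) : ℂ))
        * star ((hρj j).1.eigenvectorUnitary : Matrix (Fin (mj j)) (Fin (mj j)) ℂ) with hHdef
    have hH : ∀ j, (H j).IsHermitian := fun j => isHermitian_conj_diag _ _
    have hφH : ∀ j, (φ j (H j)).IsHermitian := by
      intro j
      have hs : star (H j) = H j := by
        rw [Matrix.star_eq_conjTranspose]
        exact hH j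
      rw [Matrix.IsHermitian, ← Matrix.star_eq_conjTranspose, ← map_star, hs]
    have hK : (∑ j, φ j (H j)).IsHermitian := by
      rw [Matrix.IsHermitian, Matrix.conjTranspose_sum]
      exact Finset.sum_congr rfl fun j _ => hφH j
    have gb := gibbs_matrix ρ (∑ j, φ j (H j)) hρ hρ1 hK
    have htr : (ρ * ∑ j, φ j (H j)).trace.re = ∑ j, ∑ k, l j k * d j k := by
      rw [Matrix.mul_sum, Matrix.trace_sum]
      rw [show ∑ j, (ρ * φ j (H j)).trace = ∑ j, ((∑ k, l j k * d j k : ℝ) : ℂ) from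
        Finset.sum_congr rfl fun j _ => ?_]
      · rw [← Complex.ofReal_sum, Complex.ofReal_re]
      · rw [← hmarg j (H j)]
        have h5 : (ρj j * H j).trace = ∑ k, ((l j k : ℝ) : ℂ) * ((d j k : ℝ) : ℂ) := by
          rw [congrArg (fun M => (M * H j).trace) (spectral' (hρj j).1), hHdef]
          exact trace_conj_diag_mul_conj_diag _ _ _
        rw [h5]
        push_cast
        rfl
    have hlow : ∀ j, (1 / p j) * (-vNEntropy (ρj j)) ≤ ∑ k, l j k * d j k := by
      intro j
      have hv : vNEntropy (ρj j) = -∑ k, l j k * Real.log (l j k) := by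
        simp only [vNEntropy]
        rw [dif_pos (hρj j).1]
      rw [hv, neg_neg, Finset.mul_sum]
      refine Finset.sum_le_sum fun k _ => ?_
      rcases eq_or_lt_of_le (hl0 j k) with h0 | h0
      · rw [← h0]
        simp
      · have hlg : Real.log (l j k) ≤ Real.log (l j k + ε) :=
          Real.log_le_log h0 (by linarith)
        have h1p : 0 < 1 / p j := div_pos one_pos (hp0 j)
        calc (1 / p j) * (l j k * Real.log (l j k))
            ≤ (1 / p j) * (l j k * Real.log (l j k + ε)) := by
              apply mul_le_mul_of_nonneg_left _ h1p.le
              exact mul_le_mul_of_nonneg_left hlg (hl0 j k)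
          _ = l j k * d j k := by rw [hddef]; ring
    have hexp : ∀ j, (NormedSpace.exp (p j • H j)).trace.re = 1 + ε * (mj j) := by
      intro j
      have h6 : p j • H j
          = ((hρj j).1.eigenvectorUnitary : Matrix (Fin (mj j)) (Fin (mj j)) ℂ)
            * diagonal (fun k => ((Real.log (l j k + ε) : ℝ) : ℂ))
            * star ((hρj j).1.eigenvectorUnitary : Matrix (Fin (mj j)) (Fin (mj j)) ℂ) := by
        have hdd : (fun k => ((p j * d j k : ℝ) : ℂ))
            = (fun k => ((Real.log (l j k + ε) : ℝ) : ℂ)) := by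
          funext k
          simp only [hddef]
          rw [← mul_assoc, mul_one_div, div_self (hp0 j).ne', one_mul]
        simp only [hHdef]
        rw [smul_conj_diag, hdd]
      rw [h6, trace_exp_unitary_conj_diag _ (fun k => Real.log (l j k + ε))]
      have h7 : (∑ k, (Real.exp (Real.log (l j k + ε)) : ℂ))
          = ((∑ k, (l j k + ε) : ℝ) : ℂ) := by
        rw [Complex.ofReal_sum]
        exact Finset.sum_congr rfl fun k _ => by
          rw [Real.exp_log (by have := hl0 j k; linarith)]
      rw [h7, Complex.ofReal_re, Finset.sum_add_distrib, hls j, Finset.sum_const,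
        Finset.card_univ, Fintype.card_fin, nsmul_eq_mul]
      ring
    have hZformula : (NormedSpace.exp (∑ j, φ j (H j))).trace.re
        = ∑ i, Real.exp (hK.eigenvalues i) := by
      conv_lhs => rw [spectral' hK]
      rw [trace_exp_unitary_conj_diag, ← Complex.ofReal_sum, Complex.ofReal_re]
    have hZpos : 0 < (NormedSpace.exp (∑ j, φ j (H j))).trace.re := by
      rw [hZformula]
      exact Finset.sum_pos (fun i _ => Real.exp_pos _) Finset.univ_nonempty
    have hprodpos : ∀ j, (0:ℝ) < 1 + ε * (mj j) := fun j => by positivity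
    have hBLj := hBL H hH
    rw [Finset.prod_congr rfl (fun j _ => by rw [hexp j])] at hBLj
    have hlog1 : Real.log ((NormedSpace.exp (∑ j, φ j (H j))).trace.re)
        ≤ Real.log C + ∑ j, (1 / p j) * Real.log (1 + ε * (mj j)) := by
      calc Real.log ((NormedSpace.exp (∑ j, φ j (H j))).trace.re)
          ≤ Real.log (C * ∏ j, (1 + ε * ((mj j : ℕ) : ℝ)) ^ (1 / p j)) :=
            Real.log_le_log hZpos hBLj
        _ = Real.log C + ∑ j, (1 / p j) * Real.log (1 + ε * (mj j)) := by
            rw [Real.log_mul hC.ne' (by positivity),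
              Real.log_prod (fun j _ => by positivity)]
            congr 1
            exact Finset.sum_congr rfl fun j _ => Real.log_rpow (hprodpos j) _
    have hlog2 : ∑ j, (1 / p j) * Real.log (1 + ε * (mj j)) ≤ ε * M := by
      rw [hMdef, Finset.mul_sum]
      refine Finset.sum_le_sum fun j _ => ?_
      have hx : Real.log (1 + ε * (mj j)) ≤ ε * (mj j) := by
        have := Real.log_le_sub_one_of_pos (hprodpos j)
        linarith
      have hnn : 0 ≤ Real.log (1 + ε * (mj j)) := by
        apply Real.log_nonneg
        have : (0:ℝ) ≤ ε * (mj j) := by positivity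
        linarith
      calc (1 / p j) * Real.log (1 + ε * (mj j))
          ≤ 1 * Real.log (1 + ε * (mj j)) :=
            mul_le_mul_of_nonneg_right ((div_le_one (hp0 j)).mpr (hp j)) hnn
        _ ≤ ε * (mj j) := by rw [one_mul]; exact hx
    have hsum_low : -∑ j, (1 / p j) * vNEntropy (ρj j) ≤ ∑ j, ∑ k, l j k * d j k := by
      have h8 : ∑ j, (1 / p j) * (-vNEntropy (ρj j))
          = -∑ j, (1 / p j) * vNEntropy (ρj j) := by
        simp [mul_neg]
      rw [← h8]
      exact Finset.sum_le_sum fun j _ => hlow j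
    linarith [gb, htr, hsum_low, hlog1, hlog2]
  rw [ge_iff_le]
  refine le_of_forall_pos_le_add fun ε hε => ?_
  have h := key (ε / (M + 1)) (by positivity)
  have h9 : ε / (M + 1) * M ≤ ε := by
    rw [div_mul_eq_mul_div, div_le_iff₀ (by linarith)]
    nlinarith
  linarith
end

section
/- Let φ_j : Matrix (Fin m_j) ℂ → Matrix (Fin m) ℂ (j = 1,…,N) be unital star-algebra homomorphisms, let p_1,…,p_N ∈ [1,∞), and let C > 0. Suppose the generalized subadditivity of entropy holds: for every density matrix ρ ∈ Matrix (Fin m) ℂ and all density matrices ρ_j satisfying Tr(ρ_j A) = Tr(ρ · φ_j(A)) for all A ∈ Matrix (Fin m_j) ℂ, one has Σ_{j=1}^N (1/p_j) S(ρ_j) ≥ S(ρ) − log C. Then for all Hermitian H_j ∈ Matrix (Fin m_j) ℂ, Tr exp(Σ_{j=1}^N φ_j(H_j)) ≤ C · Π_{j=1}^N (Tr exp(p_j • H_j))^{1/p_j}. -/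
open scoped Classical ComplexOrder

open scoped Matrix

noncomputable def dconj {n : ℕ} (W : Matrix.unitaryGroup (Fin n) ℂ) :
    ((Fin n) → ℝ) →ₐ[ℝ] Matrix (Fin n) (Fin n) ℂ where
  toFun c := (W : Matrix (Fin n) (Fin n) ℂ) * Matrix.diagonal (fun i => (c i : ℂ)) *
      star (W : Matrix (Fin n) (Fin n) ℂ)
  map_one' := by
    set_option linter.unnecessarySimpa false in simpa using (Matrix.mem_unitaryGroup_iff).mp W.2
  map_mul' c c' := by
    have h1 : star (W : Matrix (Fin n) (Fin n) ℂ) * W = 1 :=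
      (Matrix.mem_unitaryGroup_iff').mp W.2
    simp only [mul_assoc]
    rw [← mul_assoc (star (W : Matrix (Fin n) (Fin n) ℂ)) (W : Matrix (Fin n) (Fin n) ℂ), h1,
      one_mul, ← mul_assoc (Matrix.diagonal _), Matrix.diagonal_mul_diagonal]
    congr 2
    ext i j
    by_cases h : i = j <;> simp [Matrix.diagonal, h]
  map_zero' := by simp
  map_add' c c' := by
    show ((W : Matrix (Fin n) (Fin n) ℂ) * Matrix.diagonal (fun i => (((c + c') i : ℝ) : ℂ)))
        * star (W : Matrix (Fin n) (Fin n) ℂ) = _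
    have hd : Matrix.diagonal (fun i => (((c + c') i : ℝ) : ℂ))
        = Matrix.diagonal (fun i => ((c i : ℝ) : ℂ)) + Matrix.diagonal (fun i => ((c' i : ℝ) : ℂ)) := by
      ext i j; by_cases h : i = j <;> simp [Matrix.diagonal_apply, h]
    rw [hd, Matrix.mul_add, Matrix.add_mul]
  commutes' r := by
    show ((W : Matrix (Fin n) (Fin n) ℂ) * Matrix.diagonal
        (fun _ : Fin n => ((algebraMap ℝ ℝ r : ℝ) : ℂ))) * star (W : Matrix (Fin n) (Fin n) ℂ)
        = algebraMap ℝ (Matrix (Fin n) (Fin n) ℂ) r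
    have h2 : (W : Matrix (Fin n) (Fin n) ℂ) * star (W : Matrix (Fin n) (Fin n) ℂ) = 1 :=
      (Matrix.mem_unitaryGroup_iff).mp W.2
    have hd : Matrix.diagonal (fun _ : Fin n => ((algebraMap ℝ ℝ r : ℝ) : ℂ))
        = (r : ℂ) • (1 : Matrix (Fin n) (Fin n) ℂ) := by
      rw [Matrix.smul_one_eq_diagonal]; simp
    rw [hd, Matrix.mul_smul, Matrix.mul_one, Matrix.smul_mul, h2]
    rw [Algebra.algebraMap_eq_smul_one]
    norm_cast

lemma dconj_apply {n : ℕ} (W : Matrix.unitaryGroup (Fin n) ℂ) (c : Fin n → ℝ) :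
    dconj W c = (W : Matrix (Fin n) (Fin n) ℂ) * Matrix.diagonal (fun i => (c i : ℂ)) *
      star (W : Matrix (Fin n) (Fin n) ℂ) := rfl

lemma dconj_trace {n : ℕ} (W : Matrix.unitaryGroup (Fin n) ℂ) (c : Fin n → ℝ) :
    (dconj W c).trace = ∑ i, (c i : ℂ) := by
  rw [dconj_apply, Matrix.trace_mul_cycle, (Matrix.mem_unitaryGroup_iff').mp W.2,
    Matrix.one_mul, Matrix.trace_diagonal]

lemma dconj_isHermitian {n : ℕ} (W : Matrix.unitaryGroup (Fin n) ℂ) (c : Fin n → ℝ) :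
    (dconj W c).IsHermitian := by
  rw [dconj_apply]
  unfold Matrix.IsHermitian
  have hs : (star fun i => ((c i : ℝ) : ℂ)) = fun i => ((c i : ℝ) : ℂ) := by
    funext i; simp [Complex.conj_ofReal]
  simp only [Matrix.star_eq_conjTranspose, Matrix.conjTranspose_mul,
    Matrix.conjTranspose_conjTranspose, Matrix.diagonal_conjTranspose, hs, Matrix.mul_assoc]

lemma dconj_posSemidef {n : ℕ} (W : Matrix.unitaryGroup (Fin n) ℂ) {c : Fin n → ℝ}
    (hc : ∀ i, 0 ≤ c i) : (dconj W c).PosSemidef := by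
  rw [dconj_apply]
  have hd : (Matrix.diagonal fun i => (c i : ℂ)).PosSemidef := by
    apply Matrix.posSemidef_diagonal_iff.mpr
    intro i
    exact_mod_cast hc i
  have := hd.mul_mul_conjTranspose_same (W : Matrix (Fin n) (Fin n) ℂ)
  simpa [Matrix.star_eq_conjTranspose] using this

lemma dconj_exp {n : ℕ} (W : Matrix.unitaryGroup (Fin n) ℂ) (c : Fin n → ℝ) :
    NormedSpace.exp (dconj W c) = dconj W (fun i => Real.exp (c i)) := by
  rw [dconj_apply, dconj_apply]
  have hUnit : IsUnit (W : Matrix (Fin n) (Fin n) ℂ) :=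
    (Matrix.isUnit_iff_isUnit_det _).mpr (Matrix.isUnit_det_of_right_inverse ((Matrix.mem_unitaryGroup_iff).mp W.2))
  have hinv : (W : Matrix (Fin n) (Fin n) ℂ)⁻¹ = star (W : Matrix (Fin n) (Fin n) ℂ) :=
    Matrix.inv_eq_right_inv ((Matrix.mem_unitaryGroup_iff).mp W.2)
  rw [← hinv, Matrix.exp_conj _ _ hUnit, Matrix.exp_diagonal]
  congr 2
  funext i
  rw [Pi.exp_def]
  simp [← Complex.exp_eq_exp_ℂ, ← Complex.ofReal_exp]

lemma dconj_aeval {n : ℕ} (W : Matrix.unitaryGroup (Fin n) ℂ) (c : Fin n → ℝ)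
    (q : Polynomial ℝ) :
    Polynomial.aeval (dconj W c) q = dconj W (fun i => Polynomial.eval (c i) q) := by
  rw [Polynomial.aeval_algHom_apply (dconj W) c q]
  congr 1
  funext i
  have := Polynomial.aeval_algHom_apply (Pi.evalAlgHom ℝ (fun _ : Fin n => ℝ) i) c q
  set_option linter.unnecessarySimpa false in
  exact this.symm.trans (Polynomial.aeval_def _ _ |>.trans (by simp))

lemma dconj_sum_fun {n : ℕ} (V W : Matrix.unitaryGroup (Fin n) ℂ) (c d : Fin n → ℝ)
    (hcd : dconj V c = dconj W d) (f : ℝ → ℝ) :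
    ∑ i, f (c i) = ∑ i, f (d i) := by
  classical
  set s : Finset ℝ := Finset.image c Finset.univ ∪ Finset.image d Finset.univ with hs
  set q : Polynomial ℝ := Lagrange.interpolate s id f with hq
  have hnode : ∀ x ∈ s, Polynomial.eval x q = f x := by
    intro x hx
    exact Lagrange.eval_interpolate_at_node f (Set.injOn_id _) hx
  have h1 : Polynomial.aeval (dconj V c) q = dconj V (fun i => f (c i)) := by
    rw [dconj_aeval]
    congr 1
    funext i
    exact hnode _ (Finset.mem_union_left _ (Finset.mem_image_of_mem c (Finset.mem_univ i)))
  have h2 : Polynomial.aeval (dconj W d) q = dconj W (fun i => f (d i)) := by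
    rw [dconj_aeval]
    congr 1
    funext i
    exact hnode _ (Finset.mem_union_right _ (Finset.mem_image_of_mem d (Finset.mem_univ i)))
  have h3 : (dconj V (fun i => f (c i))).trace = (dconj W (fun i => f (d i))).trace := by
    rw [← h1, ← h2, hcd]
  rw [dconj_trace, dconj_trace] at h3
  exact_mod_cast h3

lemma isHermitian_dconj_eigen {n : ℕ} {A : Matrix (Fin n) (Fin n) ℂ} (hA : A.IsHermitian) :
    A = dconj hA.eigenvectorUnitary hA.eigenvalues := by
  rw [dconj_apply]
  exact hA.spectral_theorem

lemma sum_fun_eigenvalues {n : ℕ} {A : Matrix (Fin n) (Fin n) ℂ} (hA : A.IsHermitian)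
    (W : Matrix.unitaryGroup (Fin n) ℂ) (d : Fin n → ℝ)
    (hAd : A = dconj W d) (f : ℝ → ℝ) :
    ∑ i, f (hA.eigenvalues i) = ∑ i, f (d i) :=
  dconj_sum_fun _ _ _ _ ((isHermitian_dconj_eigen hA).symm.trans hAd) f

/-- entropy of a `dconj` matrix -/
lemma vNEntropy_dconj {n : ℕ} (W : Matrix.unitaryGroup (Fin n) ℂ) (c : Fin n → ℝ) :
    vNEntropy (dconj W c) = -∑ i, c i * Real.log (c i) := by
  rw [vNEntropy, dif_pos (dconj_isHermitian W c)]
  congr 1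
  exact sum_fun_eigenvalues (dconj_isHermitian W c) W c rfl (fun x => x * Real.log x)

/-- real part of trace of exp of a Hermitian matrix -/
lemma exp_trace_re {n : ℕ} {A : Matrix (Fin n) (Fin n) ℂ} (hA : A.IsHermitian) :
    (NormedSpace.exp A).trace.re = ∑ i, Real.exp (hA.eigenvalues i) := by
  conv_lhs => rw [isHermitian_dconj_eigen hA]
  rw [dconj_exp, dconj_trace]
  push_cast
  simp [← Complex.ofReal_exp]

lemma klein_real {n : ℕ} (μ ν : Fin n → ℝ) (c : Fin n → Fin n → ℝ)
    (hμ0 : ∀ i, 0 ≤ μ i) (hμ1 : ∑ i, μ i = 1) (hc0 : ∀ i k, 0 ≤ c i k)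
    (hrow : ∀ i, ∑ k, c i k = 1) (hcol : ∀ k, ∑ i, c i k = 1) :
    (-∑ i, μ i * Real.log (μ i)) + ∑ i, μ i * (∑ k, c i k * ν k) ≤
      Real.log (∑ k, Real.exp (ν k)) := by
  classical
  set a : Fin n → ℝ := fun i => ∑ k, c i k * Real.exp (ν k) with ha
  have ha0 : ∀ i, 0 < a i := by
    intro i
    have hex : ∃ k, 0 < c i k := by
      by_contra h
      push_neg at h
      have hz : ∀ k, c i k = 0 := fun k => le_antisymm (h k) (hc0 i k)
      have h0 : ∑ k, c i k = 0 := Finset.sum_eq_zero (fun k _ => hz k)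
      rw [hrow i] at h0
      norm_num at h0
    obtain ⟨k, hk⟩ := hex
    refine Finset.sum_pos' (fun k _ => mul_nonneg (hc0 i k) (Real.exp_pos _).le)
      ⟨k, Finset.mem_univ k, mul_pos hk (Real.exp_pos _)⟩
  -- Peierls: ∑ k, c i k * ν k ≤ log (a i)
  have peierls : ∀ i, ∑ k, c i k * ν k ≤ Real.log (a i) := by
    intro i
    have hjen := convexOn_exp.map_sum_le (t := Finset.univ) (w := c i) (p := ν)
      (fun k _ => hc0 i k) (hrow i) (fun k _ => Set.mem_univ _)
    simp only [smul_eq_mul] at hjen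
    calc ∑ k, c i k * ν k = Real.log (Real.exp (∑ k, c i k * ν k)) := (Real.log_exp _).symm
    _ ≤ Real.log (a i) := Real.log_le_log (Real.exp_pos _) hjen
  -- restrict to support of μ
  set s : Finset (Fin n) := Finset.univ.filter (fun i => μ i ≠ 0) with hs
  have hst : ∀ i ∈ s, 0 < μ i := fun i hi =>
    lt_of_le_of_ne (hμ0 i) (Ne.symm (Finset.mem_filter.mp hi).2)
  have hsum_s : ∑ i ∈ s, μ i = 1 := by
    rw [← hμ1]
    exact Finset.sum_filter_ne_zero Finset.univ
  have key : ∑ i, μ i * (Real.log (a i) - Real.log (μ i)) ≤ Real.log (∑ k, Real.exp (ν k)) := by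
    have hzero : ∀ i ∈ Finset.univ \ s, μ i * (Real.log (a i) - Real.log (μ i)) = 0 := by
      intro i hi
      have : μ i = 0 := by
        simp only [hs, Finset.mem_sdiff, Finset.mem_filter, Finset.mem_univ, true_and,
          not_not] at hi
        exact hi
      simp [this]
    have hres : ∑ i, μ i * (Real.log (a i) - Real.log (μ i)) =
        ∑ i ∈ s, μ i * (Real.log (a i) - Real.log (μ i)) := by
      rw [← Finset.sum_subset (Finset.subset_univ s)]
      intro i hi his
      exact hzero i (Finset.mem_sdiff.mpr ⟨hi, his⟩)
    rw [hres]
    have hdiv : ∀ i ∈ s, μ i * (Real.log (a i) - Real.log (μ i)) = μ i * Real.log (a i / μ i) := by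
      intro i hi
      rw [Real.log_div (ha0 i).ne' (hst i hi).ne']
    rw [Finset.sum_congr rfl hdiv]
    have hjen2 := strictConcaveOn_log_Ioi.concaveOn.le_map_sum (t := s) (w := μ)
      (p := fun i => a i / μ i) (fun i hi => (hst i hi).le) hsum_s
      (fun i hi => Set.mem_Ioi.mpr (div_pos (ha0 i) (hst i hi)))
    simp only [smul_eq_mul] at hjen2
    calc ∑ i ∈ s, μ i * Real.log (a i / μ i) ≤ Real.log (∑ i ∈ s, μ i * (a i / μ i)) := hjen2
    _ = Real.log (∑ i ∈ s, a i) := by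
        congr 1
        exact Finset.sum_congr rfl (fun i hi => by
          rw [mul_comm (μ i), div_mul_cancel₀ _ (hst i hi).ne'])
    _ ≤ Real.log (∑ i, a i) := by
        apply Real.log_le_log
        · have hsne : s.Nonempty := by
            rcases Finset.eq_empty_or_nonempty s with h | h
            · rw [h] at hsum_s; simp at hsum_s
            · exact h
          exact Finset.sum_pos (fun i _ => ha0 i) hsne
        · exact Finset.sum_le_sum_of_subset_of_nonneg (Finset.subset_univ s)
            (fun i _ _ => (ha0 i).le)
    _ = Real.log (∑ k, Real.exp (ν k)) := by
        congr 1
        rw [ha, Finset.sum_comm]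
        exact Finset.sum_congr rfl (fun k _ => by rw [← Finset.sum_mul, hcol k, one_mul])
  calc (-∑ i, μ i * Real.log (μ i)) + ∑ i, μ i * (∑ k, c i k * ν k)
      = ∑ i, μ i * ((∑ k, c i k * ν k) - Real.log (μ i)) := by
        rw [Finset.sum_congr rfl (fun i (_ : i ∈ Finset.univ) => mul_sub (μ i)
          (∑ k, c i k * ν k) (Real.log (μ i))), Finset.sum_sub_distrib]
        ring
  _ ≤ ∑ i, μ i * (Real.log (a i) - Real.log (μ i)) := by
        apply Finset.sum_le_sum
        intro i _
        exact mul_le_mul_of_nonneg_left (by linarith [peierls i]) (hμ0 i)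
  _ ≤ Real.log (∑ k, Real.exp (ν k)) := key

lemma trace_unitary_conj {n : ℕ} (W : Matrix.unitaryGroup (Fin n) ℂ)
    (X : Matrix (Fin n) (Fin n) ℂ) :
    ((W : Matrix (Fin n) (Fin n) ℂ) * X * star (W : Matrix (Fin n) (Fin n) ℂ)).trace = X.trace := by
  rw [Matrix.trace_mul_cycle, (Matrix.mem_unitaryGroup_iff').mp W.2, Matrix.one_mul]

lemma klein {n : ℕ} {σ M : Matrix (Fin n) (Fin n) ℂ} (hσ : σ.PosSemidef) (hσ1 : σ.trace = 1)
    (hM : M.IsHermitian) :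
    vNEntropy σ + (σ * M).trace.re ≤ Real.log ((NormedSpace.exp M).trace.re) := by
  classical
  rcases Nat.eq_zero_or_pos n with hn | hn
  · exfalso
    subst hn
    rw [Matrix.trace] at hσ1
    simp at hσ1
  set V := hσ.1.eigenvectorUnitary with hV
  set μ := hσ.1.eigenvalues with hμ
  set W := hM.eigenvectorUnitary with hW
  set ν := hM.eigenvalues with hν
  set P : Matrix (Fin n) (Fin n) ℂ :=
    star (V : Matrix (Fin n) (Fin n) ℂ) * (W : Matrix (Fin n) (Fin n) ℂ) with hP
  have hVV : (V : Matrix (Fin n) (Fin n) ℂ) * star (V : Matrix (Fin n) (Fin n) ℂ) = 1 :=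
    (Matrix.mem_unitaryGroup_iff).mp V.2
  have hVV' : star (V : Matrix (Fin n) (Fin n) ℂ) * (V : Matrix (Fin n) (Fin n) ℂ) = 1 :=
    (Matrix.mem_unitaryGroup_iff').mp V.2
  have hWW : (W : Matrix (Fin n) (Fin n) ℂ) * star (W : Matrix (Fin n) (Fin n) ℂ) = 1 :=
    (Matrix.mem_unitaryGroup_iff).mp W.2
  have hWW' : star (W : Matrix (Fin n) (Fin n) ℂ) * (W : Matrix (Fin n) (Fin n) ℂ) = 1 :=
    (Matrix.mem_unitaryGroup_iff').mp W.2
  have hProw : P * star P = 1 := by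
    rw [hP, StarMul.star_mul, star_star, Matrix.mul_assoc, ← Matrix.mul_assoc _ (star _), hWW,
      Matrix.one_mul, hVV']
  have hPcol : star P * P = 1 := by
    rw [hP, StarMul.star_mul, star_star, Matrix.mul_assoc, ← Matrix.mul_assoc _ (star _), hVV,
      Matrix.one_mul, hWW']
  set c : Fin n → Fin n → ℝ := fun i k => Complex.normSq (P i k) with hc
  -- trace identity
  have htr : (σ * M).trace = ∑ i, ∑ k, ((μ i * ν k * c i k : ℝ) : ℂ) := by
    have hσd : σ = (V : Matrix (Fin n) (Fin n) ℂ) * Matrix.diagonal (fun i => (μ i : ℂ)) *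
        star (V : Matrix (Fin n) (Fin n) ℂ) := hσ.1.spectral_theorem
    have hMd : M = (W : Matrix (Fin n) (Fin n) ℂ) * Matrix.diagonal (fun i => (ν i : ℂ)) *
        star (W : Matrix (Fin n) (Fin n) ℂ) := hM.spectral_theorem
    have hWVP : (W : Matrix (Fin n) (Fin n) ℂ) = (V : Matrix (Fin n) (Fin n) ℂ) * P := by
      rw [hP, ← Matrix.mul_assoc, hVV, Matrix.one_mul]
    have h1 : σ * M = (V : Matrix (Fin n) (Fin n) ℂ) *
        (Matrix.diagonal (fun i => (μ i : ℂ)) * P * Matrix.diagonal (fun i => (ν i : ℂ)) *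
          star P) * star (V : Matrix (Fin n) (Fin n) ℂ) := by
      rw [hσd, hMd, hWVP, StarMul.star_mul]
      simp only [Matrix.mul_assoc]
      congr 2
      rw [← Matrix.mul_assoc (star (V : Matrix (Fin n) (Fin n) ℂ)), hVV', Matrix.one_mul]
    rw [h1, trace_unitary_conj]
    rw [Matrix.trace]
    refine Finset.sum_congr rfl fun i _ => ?_
    rw [Matrix.diag_apply, Matrix.mul_apply]
    refine Finset.sum_congr rfl fun k _ => ?_
    rw [Matrix.mul_diagonal, Matrix.diagonal_mul, Matrix.star_eq_conjTranspose,
      Matrix.conjTranspose_apply]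
    have hmc : P i k * star (P i k) = (Complex.normSq (P i k) : ℂ) := Complex.mul_conj _
    push_cast
    calc (μ i : ℂ) * P i k * (ν k : ℂ) * star (P i k)
        = (μ i : ℂ) * (ν k : ℂ) * (P i k * star (P i k)) := by ring
    _ = (μ i : ℂ) * (ν k : ℂ) * (Complex.normSq (P i k) : ℂ) := by rw [hmc]
  have hcrow : ∀ i, ∑ k, c i k = 1 := by
    intro i
    have h2 := congrArg (fun X : Matrix (Fin n) (Fin n) ℂ => X i i) hProw
    simp only [Matrix.mul_apply, Matrix.star_eq_conjTranspose, Matrix.conjTranspose_apply,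
      Matrix.one_apply_eq] at h2
    have h1 : ∑ k, (Complex.normSq (P i k) : ℂ) = 1 := by
      rw [← h2]
      exact Finset.sum_congr rfl fun k _ => (Complex.mul_conj _).symm
    exact_mod_cast h1
  have hccol : ∀ k, ∑ i, c i k = 1 := by
    intro k
    have h2 := congrArg (fun X : Matrix (Fin n) (Fin n) ℂ => X k k) hPcol
    simp only [Matrix.mul_apply, Matrix.star_eq_conjTranspose, Matrix.conjTranspose_apply,
      Matrix.one_apply_eq] at h2
    have h1 : ∑ i, (Complex.normSq (P i k) : ℂ) = 1 := by
      rw [← h2]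
      refine Finset.sum_congr rfl fun i _ => ?_
      rw [mul_comm]
      exact (Complex.mul_conj _).symm
    exact_mod_cast h1
  have hμ0 : ∀ i, 0 ≤ μ i := fun i => hσ.eigenvalues_nonneg i
  have hμ1 : ∑ i, μ i = 1 := by
    have h := isHermitian_dconj_eigen hσ.1
    rw [h, dconj_trace] at hσ1
    exact_mod_cast hσ1
  have hS : vNEntropy σ = -∑ i, μ i * Real.log (μ i) := by
    rw [vNEntropy, dif_pos hσ.1]
  have hE : (NormedSpace.exp M).trace.re = ∑ k, Real.exp (ν k) := exp_trace_re hM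
  have htrre : (σ * M).trace.re = ∑ i, μ i * (∑ k, c i k * ν k) := by
    rw [htr]
    have hcast : (∑ i, ∑ k, ((μ i * ν k * c i k : ℝ) : ℂ))
        = (((∑ i, ∑ k, μ i * ν k * c i k : ℝ)) : ℂ) := by push_cast; rfl
    rw [hcast, Complex.ofReal_re]
    refine Finset.sum_congr rfl fun i _ => ?_
    rw [Finset.mul_sum]
    exact Finset.sum_congr rfl fun k _ => by ring
  have hmain := klein_real μ ν c hμ0 hμ1 (fun i k => Complex.normSq_nonneg _) hcrow hccol
  rw [hS, htrre, hE]
  linarith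

lemma PosSemidef.trace_nonneg'' {n : ℕ} {A : Matrix (Fin n) (Fin n) ℂ} (hA : A.PosSemidef) :
    0 ≤ A.trace := by
  rw [Matrix.trace]
  apply Finset.sum_nonneg
  intro i _
  have := hA.dotProduct_mulVec_nonneg (Pi.single i 1)
  simpa [Matrix.mulVec_single, dotProduct, Pi.single_apply, Finset.sum_ite_eq] using this

lemma trace_mul_posSemidef_nonneg {n : ℕ} {A Q : Matrix (Fin n) (Fin n) ℂ}
    (hA : A.PosSemidef) (hQ : Q.PosSemidef) : 0 ≤ (A * Q).trace := by
  obtain ⟨S, hSh, hSS⟩ : ∃ S : Matrix (Fin n) (Fin n) ℂ, Sᴴ = S ∧ S * S = A :=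
    by open scoped MatrixOrder in exact ⟨CFC.sqrt A, IsSelfAdjoint.of_nonneg (CFC.sqrt_nonneg A), CFC.sqrt_mul_sqrt_self A hA.nonneg⟩
  have h1 : (A * Q).trace = (Sᴴ * Q * S).trace := by
    rw [hSh, ← hSS, Matrix.mul_assoc, Matrix.trace_mul_comm]
  rw [h1]
  exact PosSemidef.trace_nonneg'' (hQ.conjTranspose_mul_mul_same _)

lemma starAlgHom_posSemidef {m mj : ℕ}
    (φ : Matrix (Fin mj) (Fin mj) ℂ →⋆ₐ[ℂ] Matrix (Fin m) (Fin m) ℂ)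
    {Q : Matrix (Fin mj) (Fin mj) ℂ} (hQ : Q.PosSemidef) : (φ Q).PosSemidef := by
  obtain ⟨S, hSh, hSS⟩ : ∃ S : Matrix (Fin mj) (Fin mj) ℂ, Sᴴ = S ∧ S * S = Q :=
    by open scoped MatrixOrder in exact ⟨CFC.sqrt Q, IsSelfAdjoint.of_nonneg (CFC.sqrt_nonneg Q), CFC.sqrt_mul_sqrt_self Q hQ.nonneg⟩
  have h2 : (φ S)ᴴ = φ S := by
    rw [← Matrix.star_eq_conjTranspose, ← map_star, Matrix.star_eq_conjTranspose, hSh]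
  have h1 : φ Q = (φ S)ᴴ * φ S := by
    rw [h2, ← map_mul, hSS]
  rw [h1]
  exact Matrix.posSemidef_conjTranspose_mul_self _

lemma marginal_exists {m mj : ℕ}
    (φ : Matrix (Fin mj) (Fin mj) ℂ →⋆ₐ[ℂ] Matrix (Fin m) (Fin m) ℂ)
    {ρ : Matrix (Fin m) (Fin m) ℂ} (hρ : ρ.PosSemidef) (hρ1 : ρ.trace = 1) :
    ∃ σ : Matrix (Fin mj) (Fin mj) ℂ, σ.PosSemidef ∧ σ.trace = 1 ∧
      ∀ A, (σ * A).trace = (ρ * φ A).trace := by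
  classical
  set σ : Matrix (Fin mj) (Fin mj) ℂ :=
    Matrix.of (fun a b => (ρ * φ (Matrix.single b a 1)).trace) with hσdef
  have hσab : ∀ a b, σ a b = (ρ * φ (Matrix.single b a 1)).trace := fun a b => rfl
  -- linearity identity
  have hlin : ∀ A : Matrix (Fin mj) (Fin mj) ℂ,
      (ρ * φ A).trace = ∑ b, ∑ a, A b a * σ a b := by
    intro A
    conv_lhs => rw [Matrix.matrix_eq_sum_single A]
    rw [map_sum, Matrix.mul_sum, Matrix.trace_sum]
    refine Finset.sum_congr rfl fun b _ => ?_
    rw [map_sum, Matrix.mul_sum, Matrix.trace_sum]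
    refine Finset.sum_congr rfl fun a _ => ?_
    have hsm : Matrix.single b a (A b a) = A b a • Matrix.single b a 1 := by
      rw [Matrix.smul_single, smul_eq_mul, mul_one]
    rw [hsm, map_smul, Matrix.mul_smul, Matrix.trace_smul, smul_eq_mul, hσab]
  have hmarg : ∀ A : Matrix (Fin mj) (Fin mj) ℂ, (σ * A).trace = (ρ * φ A).trace := by
    intro A
    rw [hlin A, Matrix.trace]
    rw [Finset.sum_comm]
    refine Finset.sum_congr rfl fun a _ => ?_
    rw [Matrix.diag_apply, Matrix.mul_apply]
    exact Finset.sum_congr rfl fun b _ => mul_comm _ _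
  -- trace one
  have hone : (∑ a, Matrix.single a a (1:ℂ)) = (1 : Matrix (Fin mj) (Fin mj) ℂ) := by
    ext i j
    rw [Matrix.sum_apply, Matrix.one_apply]
    by_cases h : i = j
    · subst h
      rw [if_pos rfl, Finset.sum_eq_single i (fun a _ ha => by
        simp [Matrix.single, ha]) (by simp)]
      simp [Matrix.single]
    · rw [if_neg h]
      refine Finset.sum_eq_zero fun a _ => ?_
      simp only [Matrix.single, Matrix.of_apply, ite_eq_right_iff, and_imp]
      rintro rfl rfl
      exact absurd rfl h
  have htr : σ.trace = 1 := by
    rw [Matrix.trace]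
    have : ∀ a : Fin mj, σ.diag a = (ρ * φ (Matrix.single a a 1)).trace := fun a => rfl
    rw [Finset.sum_congr rfl fun a _ => this a, ← Matrix.trace_sum, ← Matrix.mul_sum, ← map_sum,
      hone, map_one, Matrix.mul_one, hρ1]
  -- Hermitian
  have hE : ∀ a b : Fin mj, (Matrix.single b a (1:ℂ))ᴴ = Matrix.single a b 1 := by
    intro a b
    ext i j
    simp [Matrix.single, Matrix.conjTranspose_apply, and_comm]
  have hherm : σ.IsHermitian := by
    ext a b
    rw [Matrix.conjTranspose_apply, hσab, hσab]
    rw [← Matrix.trace_conjTranspose, Matrix.conjTranspose_mul, hρ.1,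
      ← Matrix.star_eq_conjTranspose (φ _), ← map_star, Matrix.star_eq_conjTranspose, hE,
      Matrix.trace_mul_comm]
  -- PSD
  have hpsd : σ.PosSemidef := by
    refine Matrix.PosSemidef.of_dotProduct_mulVec_nonneg hherm fun x => ?_
    have hquad : dotProduct (star x) (σ *ᵥ x)
        = (ρ * φ (Matrix.vecMulVec x (star x))).trace := by
      calc dotProduct (star x) (σ *ᵥ x)
          = ∑ a, ∑ b, star (x a) * (σ a b * x b) := by
            simp [dotProduct, Matrix.mulVec, Finset.mul_sum]
        _ = ∑ b, ∑ a, (Matrix.vecMulVec x (star x)) b a * σ a b := by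
            rw [Finset.sum_comm]
            refine Finset.sum_congr rfl fun b _ => Finset.sum_congr rfl fun a _ => ?_
            rw [Matrix.vecMulVec_apply, Pi.star_apply]
            ring
        _ = (ρ * φ (Matrix.vecMulVec x (star x))).trace := (hlin _).symm
    rw [hquad]
    have hvv : (Matrix.vecMulVec x (star x)).PosSemidef := by
      have : Matrix.vecMulVec x (star x) =
          (Matrix.of (fun (_ : Fin 1) b => star (x b)))ᴴ * Matrix.of (fun (_ : Fin 1) b => star (x b)) := by
        ext i j
        simp [Matrix.mul_apply, Matrix.vecMulVec_apply, Matrix.conjTranspose_apply]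
      rw [this]
      exact Matrix.posSemidef_conjTranspose_mul_self _
    exact trace_mul_posSemidef_nonneg hρ (starAlgHom_posSemidef φ hvv)
  exact ⟨σ, hpsd, htr, hmarg⟩

lemma isHermitian_realSmul {n : ℕ} {A : Matrix (Fin n) (Fin n) ℂ} (hA : A.IsHermitian) (r : ℝ) :
    (r • A).IsHermitian := by
  have h : (r • A)ᴴ = r • Aᴴ := by
    ext i j
    simp [Matrix.conjTranspose_apply, star_smul]
  rw [Matrix.IsHermitian, h, hA]

/-- If the generalized subadditivity of entropy `Σ_j (1/p_j) S(ρ_j) ≥ S(ρ) - log C` holds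
for every density matrix `ρ` with marginals `ρ_j`, then the non-commutative Brascamp–Lieb
inequality `Tr exp (Σ_j φ_j(H_j)) ≤ C · Π_j (Tr exp (p_j • H_j))^{1/p_j}` holds for all
Hermitian `H_j`. -/
theorem brascamp_lieb_of_subadditivity_of_entropy {N m : ℕ} (mj : Fin N → ℕ)
    (φ : ∀ j, Matrix (Fin (mj j)) (Fin (mj j)) ℂ →⋆ₐ[ℂ] Matrix (Fin m) (Fin m) ℂ)
    (p : Fin N → ℝ) (hp : ∀ j, 1 ≤ p j) (C : ℝ) (hC : 0 < C)
    (hSA : ∀ ρ : Matrix (Fin m) (Fin m) ℂ, ρ.PosSemidef → ρ.trace = 1 →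
      ∀ ρj : ∀ j, Matrix (Fin (mj j)) (Fin (mj j)) ℂ,
        (∀ j, (ρj j).PosSemidef) → (∀ j, (ρj j).trace = 1) →
        (∀ j, ∀ A : Matrix (Fin (mj j)) (Fin (mj j)) ℂ,
          (ρj j * A).trace = (ρ * φ j A).trace) →
        ∑ j, (1 / p j) * vNEntropy (ρj j) ≥ vNEntropy ρ - Real.log C)
    (H : ∀ j, Matrix (Fin (mj j)) (Fin (mj j)) ℂ) (hH : ∀ j, (H j).IsHermitian) :
    (NormedSpace.exp (∑ j, φ j (H j))).trace.re ≤
      C * ∏ j, ((NormedSpace.exp (p j • H j)).trace.re) ^ (1 / p j) := by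
  classical
  have hp0 : ∀ j, 0 < p j := fun j => lt_of_lt_of_le one_pos (hp j)
  have hsmulH : ∀ j, (p j • H j).IsHermitian := fun j => isHermitian_realSmul (hH j) (p j)
  have hTnonneg : ∀ j, 0 ≤ (NormedSpace.exp (p j • H j)).trace.re := by
    intro j
    rw [exp_trace_re (hsmulH j)]
    exact Finset.sum_nonneg fun i _ => (Real.exp_pos _).le
  rcases Nat.eq_zero_or_pos m with hm | hm
  · -- m = 0 : LHS = 0
    subst hm
    have hL : (NormedSpace.exp (∑ j, φ j (H j))).trace = 0 := by
      rw [Matrix.trace]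
      exact Finset.sum_of_isEmpty _
    rw [hL]
    simp only [Complex.zero_re]
    exact mul_nonneg hC.le (Finset.prod_nonneg fun j _ =>
      Real.rpow_nonneg (hTnonneg j) _)
  · -- m > 0
    have hmne : Nonempty (Fin m) := ⟨⟨0, hm⟩⟩
    have hmj : ∀ j, 0 < mj j := by
      intro j
      rcases Nat.eq_zero_or_pos (mj j) with h0 | h
      · exfalso
        have h1 : (1 : Matrix (Fin (mj j)) (Fin (mj j)) ℂ) = 0 := by
          ext i k
          exact absurd i.2 (by omega)
        have h2 : (1 : Matrix (Fin m) (Fin m) ℂ) = 0 := by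
          rw [← map_one (φ j), h1, map_zero]
        have h3 := congrFun (congrFun h2 ⟨0, hm⟩) ⟨0, hm⟩
        rw [Matrix.one_apply_eq, Matrix.zero_apply] at h3
        exact one_ne_zero h3
      · exact h
    set K : Matrix (Fin m) (Fin m) ℂ := ∑ j, φ j (H j) with hK
    have hKh : K.IsHermitian := by
      have hφH : ∀ j, (φ j (H j)).IsHermitian := by
        intro j
        show (φ j (H j))ᴴ = φ j (H j)
        rw [← Matrix.star_eq_conjTranspose, ← map_star, Matrix.star_eq_conjTranspose, hH j]
      show Kᴴ = K
      rw [hK, Matrix.conjTranspose_sum]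
      exact Finset.sum_congr rfl fun j _ => hφH j
    set V := hKh.eigenvectorUnitary with hV
    set κ := hKh.eigenvalues with hκ
    set Z : ℝ := ∑ i, Real.exp (κ i) with hZ
    have hZpos : 0 < Z :=
      Finset.sum_pos (fun i _ => Real.exp_pos _) Finset.univ_nonempty
    set g : Fin m → ℝ := fun i => Real.exp (κ i) / Z with hg
    have hg0 : ∀ i, 0 ≤ g i := fun i => div_nonneg (Real.exp_pos _).le hZpos.le
    have hgsum : ∑ i, g i = 1 := by
      rw [hg, ← Finset.sum_div, ← hZ, div_self hZpos.ne']
    set ρ : Matrix (Fin m) (Fin m) ℂ := dconj V g with hρ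
    have hρpsd : ρ.PosSemidef := dconj_posSemidef V hg0
    have hρtr : ρ.trace = 1 := by
      rw [hρ, dconj_trace, ← Complex.ofReal_sum, hgsum, Complex.ofReal_one]
    have hKdecomp : K = dconj V κ := isHermitian_dconj_eigen hKh
    have hTrExpK : (NormedSpace.exp K).trace.re = Z := (exp_trace_re hKh).trans hZ.symm
    -- entropy of ρ
    have hSρ : vNEntropy ρ = Real.log Z - ∑ i, g i * κ i := by
      rw [hρ, vNEntropy_dconj]
      have hlog : ∀ i, Real.log (g i) = κ i - Real.log Z := by
        intro i
        rw [hg, Real.log_div (Real.exp_pos _).ne' hZpos.ne', Real.log_exp]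
      rw [Finset.sum_congr rfl fun i (_ : i ∈ Finset.univ) => by rw [hlog i]]
      have : ∀ i, g i * (κ i - Real.log Z) = g i * κ i - Real.log Z * g i := fun i => by ring
      rw [Finset.sum_congr rfl fun i (_ : i ∈ Finset.univ) => this i, Finset.sum_sub_distrib,
        ← Finset.mul_sum, hgsum, mul_one]
      ring
    -- trace of ρ K
    have hρK : (ρ * K).trace.re = ∑ i, g i * κ i := by
      have hmul : ρ * K = dconj V (fun i => g i * κ i) := by
        rw [hρ, hKdecomp, ← map_mul]
        rfl
      rw [hmul, dconj_trace, ← Complex.ofReal_sum, Complex.ofReal_re]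
    -- marginals
    choose σ hσpsd hσtr hσmarg using fun j => marginal_exists (φ j) hρpsd hρtr
    have hSA' := hSA ρ hρpsd hρtr σ hσpsd hσtr hσmarg
    -- Klein inequality for each j
    have hklein : ∀ j, (1/p j) * vNEntropy (σ j) ≤
        (1/p j) * Real.log ((NormedSpace.exp (p j • H j)).trace.re)
          - (ρ * φ j (H j)).trace.re := by
      intro j
      have hk := klein (hσpsd j) (hσtr j) (hsmulH j)
      have ht : (σ j * (p j • H j)).trace.re = p j * (ρ * φ j (H j)).trace.re := by
        rw [Matrix.mul_smul, Matrix.trace_smul, hσmarg j (H j)]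
        exact Complex.smul_re _ _
      rw [ht] at hk
      have h2 : (1/p j) * (vNEntropy (σ j) + p j * (ρ * φ j (H j)).trace.re) ≤
          (1/p j) * Real.log ((NormedSpace.exp (p j • H j)).trace.re) :=
        mul_le_mul_of_nonneg_left hk (one_div_nonneg.mpr (hp0 j).le)
      have h3 : (1/p j) * (vNEntropy (σ j) + p j * (ρ * φ j (H j)).trace.re) =
          (1/p j) * vNEntropy (σ j) + (ρ * φ j (H j)).trace.re := by
        rw [mul_add, one_div, inv_mul_cancel_left₀ (hp0 j).ne']
      linarith
    have hsum1 : ∑ j, (ρ * φ j (H j)).trace.re = (ρ * K).trace.re := by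
      rw [hK, Matrix.mul_sum, Matrix.trace_sum, Complex.re_sum]
    have hchain : Real.log Z ≤ Real.log C +
        ∑ j, (1/p j) * Real.log ((NormedSpace.exp (p j • H j)).trace.re) := by
      have h5 : ∑ j, (1/p j) * vNEntropy (σ j) ≤
          ∑ j, ((1/p j) * Real.log ((NormedSpace.exp (p j • H j)).trace.re)
            - (ρ * φ j (H j)).trace.re) :=
        Finset.sum_le_sum fun j _ => hklein j
      rw [Finset.sum_sub_distrib, hsum1] at h5
      have h6 := hSA'
      rw [hSρ] at h6
      linarith [hρK]
    have hTpos : ∀ j, 0 < (NormedSpace.exp (p j • H j)).trace.re := by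
      intro j
      rw [exp_trace_re (hsmulH j)]
      have : Nonempty (Fin (mj j)) := ⟨⟨0, hmj j⟩⟩
      exact Finset.sum_pos (fun i _ => Real.exp_pos _) Finset.univ_nonempty
    rw [show (NormedSpace.exp (∑ j, φ j (H j))).trace.re
        = (NormedSpace.exp K).trace.re from rfl, hTrExpK]
    calc Z = Real.exp (Real.log Z) := (Real.exp_log hZpos).symm
    _ ≤ Real.exp (Real.log C +
        ∑ j, (1/p j) * Real.log ((NormedSpace.exp (p j • H j)).trace.re)) :=
      Real.exp_le_exp.mpr hchain
    _ = C * ∏ j, ((NormedSpace.exp (p j • H j)).trace.re) ^ (1/p j) := by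
      rw [Real.exp_add, Real.exp_log hC, Real.exp_sum]
      congr 1
      refine Finset.prod_congr rfl fun j _ => ?_
      rw [Real.rpow_def_of_pos (hTpos j), mul_comm]
end

section
/- Let ρ ∈ Matrix (Fin m) ℂ be a density matrix and H ∈ Matrix (Fin m) ℂ Hermitian. Then Tr(ρ H) − log Tr(exp H) ≤ Tr(ρ log ρ). Moreover, if ρ is positive definite, then equality holds if and only if H = log ρ + c • 1 for some real constant c. -/
open scoped Classical ComplexOrder

/-- The logarithm `log ρ` of a Hermitian matrix, defined by functional calculus on the
spectrum via the spectral decomposition (with the convention `log 0 = 0` on eigenvalues). -/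
noncomputable def matLog {X : Type*} [Fintype X] [DecidableEq X] (ρ : Matrix X X ℂ) :
    Matrix X X ℂ :=
  if h : ρ.IsHermitian then
    (h.eigenvectorUnitary : Matrix X X ℂ) *
      Matrix.diagonal (fun i => (Real.log (h.eigenvalues i) : ℂ)) *
      (star (h.eigenvectorUnitary : Matrix X X ℂ))
  else 0

open Matrix

private lemma klein_ineq {p q : ℝ} (hp : 0 ≤ p) (hq : 0 < q) :
    p - q ≤ p * Real.log p - p * Real.log q := by
  rcases eq_or_lt_of_le hp with h | h
  · simp [← h]; positivity
  · have h1 : Real.log (q / p) ≤ q / p - 1 := Real.log_le_sub_one_of_pos (by positivity)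
    rw [Real.log_div hq.ne' h.ne'] at h1
    have := mul_le_mul_of_nonneg_left h1 hp
    rw [mul_sub, mul_sub, mul_div_cancel₀ _ h.ne', mul_one] at this
    linarith

private lemma klein_eq_iff {p q : ℝ} (hp : 0 < p) (hq : 0 < q) :
    p * Real.log p - p * Real.log q - p + q = 0 ↔ p = q := by
  constructor
  · intro he
    by_contra hne
    have h1 : Real.log (q / p) < q / p - 1 :=
      Real.log_lt_sub_one_of_pos (by positivity) (by
        intro hqp
        exact hne ((div_eq_one_iff_eq hp.ne').mp hqp).symm)
    rw [Real.log_div hq.ne' hp.ne'] at h1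
    have := mul_lt_mul_of_pos_left h1 hp
    rw [mul_sub, mul_sub, mul_div_cancel₀ _ hp.ne', mul_one] at this
    linarith
  · rintro rfl; ring

private lemma trace_conj_diag {m : ℕ} (U : Matrix (Fin m) (Fin m) ℂ) (hU : star U * U = 1)
    (d : Fin m → ℂ) :
    (U * Matrix.diagonal d * star U).trace = ∑ j, d j := by
  rw [trace_mul_cycle, hU, one_mul, trace_diagonal]

private lemma trace_two_conj {m : ℕ} (U V : Matrix (Fin m) (Fin m) ℂ)
    (hU : star U * U = 1) (hU' : U * star U = 1) (dp dh : Fin m → ℂ) :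
    (U * Matrix.diagonal dp * star U * (V * Matrix.diagonal dh * star V)).trace
      = ∑ i, ∑ j, dp i * dh j * ((star U * V) i j * star ((star U * V) i j)) := by
  set W : Matrix (Fin m) (Fin m) ℂ := star U * V with hW
  have hsW : star W = star V * U := by rw [hW, Matrix.star_mul, star_star]
  have key : U * (Matrix.diagonal dp * W * Matrix.diagonal dh * star W) * star U
      = U * Matrix.diagonal dp * star U * (V * Matrix.diagonal dh * star V) := by
    rw [hsW, hW]
    simp only [Matrix.mul_assoc, hU', Matrix.mul_one]
  rw [← key, trace_mul_cycle, ← Matrix.mul_assoc, hU, one_mul]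
  rw [Matrix.mul_assoc, Matrix.mul_assoc, Matrix.trace]
  rw [show ∀ M : Matrix (Fin m) (Fin m) ℂ, ∑ i, M.diag i = ∑ i, M i i from fun _ => rfl]
  refine Finset.sum_congr rfl fun i _ => ?_
  rw [Matrix.diagonal_mul]
  simp only [Matrix.mul_apply, Matrix.diagonal_mul, Matrix.star_apply, Finset.mul_sum]
  refine Finset.sum_congr rfl fun j _ => ?_
  simp only [Matrix.diagonal_apply, mul_ite, mul_zero, ite_mul, zero_mul,
    Finset.sum_ite_eq, Finset.sum_ite_eq', Finset.mem_univ, if_true]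
  ring

private lemma exp_conj_diag {m : ℕ} (V : Matrix (Fin m) (Fin m) ℂ) (hV : star V * V = 1)
    (d : Fin m → ℂ) :
    NormedSpace.exp (V * Matrix.diagonal d * star V) =
      V * Matrix.diagonal (fun j => Complex.exp (d j)) * star V := by
  have hVi : V⁻¹ = star V := Matrix.inv_eq_left_inv hV
  have : Invertible V := invertibleOfLeftInverse _ _ hV
  have h2 := Matrix.exp_conj V (Matrix.diagonal d) (isUnit_of_invertible V)
  rw [hVi, Matrix.exp_diagonal, Pi.exp_def] at h2
  rw [h2, ← Complex.exp_eq_exp_ℂ]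

private lemma conj_mul_conj {m : ℕ} (U A B : Matrix (Fin m) (Fin m) ℂ)
    (hU : star U * U = 1) :
    (U * A * star U) * (U * B * star U) = U * (A * B) * star U := by
  have h1 : (U * A * star U) * (U * B * star U)
      = U * (A * ((star U * U) * (B * star U))) := by
    simp only [Matrix.mul_assoc]
  rw [h1, hU, one_mul]
  simp only [Matrix.mul_assoc]

private lemma conj_diag_add_const {m : ℕ} (U : Matrix (Fin m) (Fin m) ℂ)
    (hU' : U * star U = 1) (f : Fin m → ℝ) (c : ℝ) :
    U * Matrix.diagonal (fun i => ((f i + c : ℝ) : ℂ)) * star U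
      = U * Matrix.diagonal (fun i => ((f i : ℝ) : ℂ)) * star U
        + (c : ℂ) • (1 : Matrix (Fin m) (Fin m) ℂ) := by
  have hsplit : Matrix.diagonal (fun i => ((f i + c : ℝ) : ℂ))
      = Matrix.diagonal (fun i => ((f i : ℝ) : ℂ)) + (c : ℂ) • 1 := by
    ext i k
    by_cases hik : i = k <;>
      simp [Matrix.diagonal_apply, Matrix.one_apply, hik] <;> push_cast <;> ring
  rw [hsplit, Matrix.mul_add, Matrix.add_mul, mul_smul_comm, smul_mul_assoc,
    Matrix.mul_one, hU']

/-- For a density matrix `ρ` and a Hermitian `H`,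
`Tr(ρH) - log Tr(exp H) ≤ Tr(ρ log ρ)`; if `ρ` is positive definite then equality holds
if and only if `H = log ρ + c • 1` for some real `c`. -/
theorem trace_sub_log_trace_exp_le_neg_entropy {m : ℕ}
    (ρ H : Matrix (Fin m) (Fin m) ℂ)
    (hρ : ρ.PosSemidef) (hρ1 : ρ.trace = 1) (hH : H.IsHermitian) :
    ((ρ * H).trace.re - Real.log (NormedSpace.exp H).trace.re ≤ -vNEntropy ρ) ∧
    (ρ.PosDef →
      ((ρ * H).trace.re - Real.log (NormedSpace.exp H).trace.re = -vNEntropy ρ ↔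
        ∃ c : ℝ, H = matLog ρ + (c : ℂ) • (1 : Matrix (Fin m) (Fin m) ℂ))) := by
  have hρ' : ρ.IsHermitian := hρ.1
  have hm0 : 0 < m := by
    by_contra hc
    push_neg at hc
    obtain rfl : m = 0 := Nat.le_zero.mp hc
    simp [Matrix.trace] at hρ1
  haveI : Nonempty (Fin m) := ⟨⟨0, hm0⟩⟩
  set U : Matrix (Fin m) (Fin m) ℂ := (hρ'.eigenvectorUnitary : Matrix (Fin m) (Fin m) ℂ)
    with hUdef
  set V : Matrix (Fin m) (Fin m) ℂ := (hH.eigenvectorUnitary : Matrix (Fin m) (Fin m) ℂ)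
    with hVdef
  have hU : star U * U = 1 := Matrix.mem_unitaryGroup_iff'.mp hρ'.eigenvectorUnitary.2
  have hU' : U * star U = 1 := Matrix.mem_unitaryGroup_iff.mp hρ'.eigenvectorUnitary.2
  have hV : star V * V = 1 := Matrix.mem_unitaryGroup_iff'.mp hH.eigenvectorUnitary.2
  have hV' : V * star V = 1 := Matrix.mem_unitaryGroup_iff.mp hH.eigenvectorUnitary.2
  set p : Fin m → ℝ := hρ'.eigenvalues with hpdef
  set h : Fin m → ℝ := hH.eigenvalues with hhdef
  have hp0 : ∀ i, 0 ≤ p i := hρ.eigenvalues_nonneg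
  have hρspec : ρ = U * Matrix.diagonal (fun i => ((p i : ℝ) : ℂ)) * star U := by
    convert hρ'.spectral_theorem using 2
    rw [Unitary.conjStarAlgAut_apply]; rfl
  have hHspec : H = V * Matrix.diagonal (fun j => ((h j : ℝ) : ℂ)) * star V := by
    convert hH.spectral_theorem using 2
    rw [Unitary.conjStarAlgAut_apply]; rfl
  set W : Matrix (Fin m) (Fin m) ℂ := star U * V with hWdef
  have hWW' : W * star W = 1 := by
    have h1 : W * star W = star U * (V * star V * U) := by
      rw [hWdef, Matrix.star_mul, star_star]; simp only [Matrix.mul_assoc]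
    rw [h1, hV', one_mul, hU]
  have hWW : star W * W = 1 := by
    have h1 : star W * W = star V * (U * star U * V) := by
      rw [hWdef, Matrix.star_mul, star_star]; simp only [Matrix.mul_assoc]
    rw [h1, hU', one_mul, hV]
  set a : Fin m → Fin m → ℝ := fun i j => Complex.normSq (W i j) with hadef
  have ha0 : ∀ i j, 0 ≤ a i j := fun i j => Complex.normSq_nonneg _
  have haRow : ∀ i, ∑ j, a i j = 1 := by
    intro i
    have h1 : ∑ j, (Complex.normSq (W i j) : ℂ) = 1 := by
      have h2 := congrArg (fun M : Matrix (Fin m) (Fin m) ℂ => M i i) hWW'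
      simpa [Matrix.mul_apply, Matrix.star_apply, Complex.star_def, Complex.mul_conj,
        Matrix.one_apply] using h2
    exact_mod_cast h1
  have haCol : ∀ j, ∑ i, a i j = 1 := by
    intro j
    have h1 : ∑ i, (Complex.normSq (W i j) : ℂ) = 1 := by
      have h2 := congrArg (fun M : Matrix (Fin m) (Fin m) ℂ => M j j) hWW
      simpa [Matrix.mul_apply, Matrix.star_apply, Complex.star_def,
        ← Complex.normSq_eq_conj_mul_self, Matrix.one_apply] using h2
    exact_mod_cast h1
  have hTr1 : ∑ i, p i = 1 := by
    have h1 : ∑ i, ((p i : ℝ) : ℂ) = 1 := by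
      rw [← trace_conj_diag U hU (fun i => ((p i : ℝ) : ℂ)), ← hρspec, hρ1]
    exact_mod_cast h1
  set T := ∑ i, ∑ j, p i * h j * a i j with hTdef
  set Z := ∑ j, Real.exp (h j) with hZdef
  set E := ∑ i, p i * Real.log (p i) with hEdef
  have hTrρH : (ρ * H).trace = ((T : ℝ) : ℂ) := by
    conv_lhs => rw [hρspec, hHspec]
    rw [trace_two_conj U V hU hU']
    rw [hTdef]
    push_cast
    refine Finset.sum_congr rfl fun i _ => Finset.sum_congr rfl fun j _ => ?_
    have : W i j * star (W i j) = ((a i j : ℝ) : ℂ) := by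
      simp [hadef, Complex.star_def, Complex.mul_conj]
    rw [this]
  have hTrExp : (NormedSpace.exp H).trace = ((Z : ℝ) : ℂ) := by
    conv_lhs => rw [hHspec]
    rw [exp_conj_diag V hV, trace_conj_diag V hV, hZdef]
    push_cast
    refine Finset.sum_congr rfl fun j _ => ?_
    rw [← Complex.ofReal_exp]
  have hZpos : 0 < Z := Finset.sum_pos (fun j _ => Real.exp_pos _) Finset.univ_nonempty
  have hLHS : (ρ * H).trace.re - Real.log (NormedSpace.exp H).trace.re = T - Real.log Z := by
    rw [hTrρH, hTrExp, Complex.ofReal_re, Complex.ofReal_re]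
  have hvN : -vNEntropy ρ = E := by
    rw [vNEntropy, dif_pos hρ', neg_neg]
  set q : Fin m → ℝ := fun j => Real.exp (h j) / Z with hqdef
  have hqpos : ∀ j, 0 < q j := fun j => div_pos (Real.exp_pos _) hZpos
  have hqsum : ∑ j, q j = 1 := by
    rw [hqdef, ← Finset.sum_div, ← hZdef, div_self hZpos.ne']
  have hlogq : ∀ j, Real.log (q j) = h j - Real.log Z := fun j => by
    rw [hqdef, Real.log_div (Real.exp_ne_zero _) hZpos.ne', Real.log_exp]
  set F : Fin m → Fin m → ℝ :=
    fun i j => p i * Real.log (p i) - p i * Real.log (q j) - p i + q j with hFdef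
  have hF0 : ∀ i j, 0 ≤ F i j := fun i j => by
    have := klein_ineq (hp0 i) (hqpos j)
    rw [hFdef]; dsimp only; linarith
  set S := ∑ i, ∑ j, a i j * F i j with hSdef
  have hS0 : 0 ≤ S :=
    Finset.sum_nonneg fun i _ => Finset.sum_nonneg fun j _ => mul_nonneg (ha0 i j) (hF0 i j)
  have hA1 : ∑ i, ∑ j, a i j * (p i * Real.log (p i)) = E := by
    rw [hEdef]
    refine Finset.sum_congr rfl fun i _ => ?_
    rw [← Finset.sum_mul, haRow i, one_mul]
  have hA2 : ∑ i, ∑ j, a i j * (p i * h j) = T := by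
    rw [hTdef]
    refine Finset.sum_congr rfl fun i _ => Finset.sum_congr rfl fun j _ => ?_
    ring
  have hA3 : ∑ i, ∑ j, a i j * p i = 1 := by
    have h1 : ∀ i, ∑ j, a i j * p i = p i := fun i => by
      rw [← Finset.sum_mul, haRow i, one_mul]
    rw [Finset.sum_congr rfl fun i _ => h1 i, hTr1]
  have hA4 : ∑ i, ∑ j, a i j * q j = 1 := by
    rw [Finset.sum_comm]
    have h1 : ∀ j, ∑ i, a i j * q j = q j := fun j => by
      rw [← Finset.sum_mul, haCol j, one_mul]
    rw [Finset.sum_congr rfl fun j _ => h1 j, hqsum]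
  have hSalg : S = E - T + Real.log Z := by
    have expand : S = (∑ i, ∑ j, a i j * (p i * Real.log (p i)))
        - (∑ i, ∑ j, a i j * (p i * h j))
        + Real.log Z * (∑ i, ∑ j, a i j * p i)
        - (∑ i, ∑ j, a i j * p i) + (∑ i, ∑ j, a i j * q j) := by
      rw [hSdef]
      simp only [Finset.mul_sum, ← Finset.sum_sub_distrib, ← Finset.sum_add_distrib]
      refine Finset.sum_congr rfl fun i _ => Finset.sum_congr rfl fun j _ => ?_
      rw [hFdef]; dsimp only; rw [hlogq j]; ring
    rw [expand, hA1, hA2, hA3, hA4]; ring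
  constructor
  · rw [hLHS, hvN]; linarith
  · intro hPD
    constructor
    · intro heq
      rw [hLHS, hvN] at heq
      have hSzero : S = 0 := by rw [hSalg]; linarith
      have hterm : ∀ i j, a i j * F i j = 0 := by
        intro i j
        have houter := (Finset.sum_eq_zero_iff_of_nonneg
          (fun i _ => Finset.sum_nonneg fun j _ => mul_nonneg (ha0 i j) (hF0 i j))).mp
          (hSdef ▸ hSzero)
        have hinner := (Finset.sum_eq_zero_iff_of_nonneg
          (fun j _ => mul_nonneg (ha0 i j) (hF0 i j))).mp (houter i (Finset.mem_univ i))
        exact hinner j (Finset.mem_univ j)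
      have hkey : ∀ i j, W i j ≠ 0 → h j = Real.log (p i) + Real.log Z := by
        intro i j hW0
        have ha' : a i j ≠ 0 := by
          rw [hadef]; dsimp only
          exact fun hc => hW0 (Complex.normSq_eq_zero.mp hc)
        have hFz : F i j = 0 := by
          rcases mul_eq_zero.mp (hterm i j) with h' | h'
          · exact absurd h' ha'
          · exact h'
        have hpq : p i = q j := by
          refine (klein_eq_iff (hPD.eigenvalues_pos i) (hqpos j)).mp ?_
          rw [hFdef] at hFz; dsimp only at hFz; linarith
        have hexp : Real.exp (h j) = p i * Z := by
          have : q j = p i := hpq.symm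
          rw [hqdef] at this; dsimp only at this
          field_simp at this
          linarith
        calc h j = Real.log (Real.exp (h j)) := (Real.log_exp _).symm
          _ = Real.log (p i * Z) := by rw [hexp]
          _ = Real.log (p i) + Real.log Z :=
              Real.log_mul (hPD.eigenvalues_pos i).ne' hZpos.ne'
      refine ⟨Real.log Z, ?_⟩
      have hMat : W * Matrix.diagonal (fun j => ((h j : ℝ) : ℂ)) * star W
          = Matrix.diagonal (fun i => ((Real.log (p i) + Real.log Z : ℝ) : ℂ)) := by
        ext i k
        have hL : (W * Matrix.diagonal (fun j => ((h j : ℝ) : ℂ)) * star W) i k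
            = ∑ j, W i j * ((h j : ℝ) : ℂ) * star (W k j) := by
          rw [Matrix.mul_apply]
          refine Finset.sum_congr rfl fun j _ => ?_
          rw [Matrix.mul_diagonal, Matrix.star_apply]
        rw [hL]
        have hstep : ∀ j ∈ Finset.univ, W i j * ((h j : ℝ) : ℂ) * star (W k j)
            = W i j * ((Real.log (p i) + Real.log Z : ℝ) : ℂ) * star (W k j) := by
          intro j _
          by_cases h0 : W i j = 0
          · rw [h0]; ring
          · rw [hkey i j h0]
        rw [Finset.sum_congr rfl hstep]
        have hfac : ∑ j, W i j * ((Real.log (p i) + Real.log Z : ℝ) : ℂ) * star (W k j)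
            = ((Real.log (p i) + Real.log Z : ℝ) : ℂ) * ∑ j, W i j * star (W k j) := by
          rw [Finset.mul_sum]
          refine Finset.sum_congr rfl fun j _ => ?_
          ring
        rw [hfac]
        have hWWik : ∑ j, W i j * star (W k j) = (1 : Matrix (Fin m) (Fin m) ℂ) i k := by
          have h2 := congrArg (fun M : Matrix (Fin m) (Fin m) ℂ => M i k) hWW'
          simpa [Matrix.mul_apply, Matrix.star_apply] using h2
        rw [hWWik]
        by_cases hik : i = k <;> simp [Matrix.one_apply, Matrix.diagonal_apply, hik]
      have hUW : U * W = V := by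
        rw [hWdef, ← Matrix.mul_assoc, hU', one_mul]
      have hH2 : H = U * (W * Matrix.diagonal (fun j => ((h j : ℝ) : ℂ)) * star W) * star U := by
        rw [hHspec, ← hUW, Matrix.star_mul]
        simp only [Matrix.mul_assoc]
      rw [hH2, hMat, conj_diag_add_const U hU' (fun i => Real.log (p i)) (Real.log Z)]
      congr 1
      rw [matLog, dif_pos hρ']
    · rintro ⟨c, hc⟩
      have hclog : matLog ρ
          = U * Matrix.diagonal (fun i => ((Real.log (p i) : ℝ) : ℂ)) * star U := by
        rw [matLog, dif_pos hρ']
      have hexp : (NormedSpace.exp H).trace = ((Real.exp c : ℝ) : ℂ) := by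
        rw [hc, hclog, ← conj_diag_add_const U hU' (fun i => Real.log (p i)) c]
        rw [exp_conj_diag U hU, trace_conj_diag U hU]
        have h1 : ∀ i, Complex.exp (((Real.log (p i) + c : ℝ) : ℂ))
            = ((p i * Real.exp c : ℝ) : ℂ) := by
          intro i
          rw [← Complex.ofReal_exp, Real.exp_add, Real.exp_log (hPD.eigenvalues_pos i)]
        rw [Finset.sum_congr rfl fun i _ => h1 i]
        have h2 : (∑ i, p i * Real.exp c) = Real.exp c := by
          rw [← Finset.sum_mul, hTr1, one_mul]
        push_cast
        exact_mod_cast congrArg (fun x : ℝ => (x : ℂ)) h2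
      have hρH : (ρ * H).trace = ((E + c : ℝ) : ℂ) := by
        rw [hc, hclog, ← conj_diag_add_const U hU' (fun i => Real.log (p i)) c]
        conv_lhs => rw [hρspec]
        rw [conj_mul_conj U _ _ hU, Matrix.diagonal_mul_diagonal, trace_conj_diag U hU]
        have h2 : ∑ i, p i * (Real.log (p i) + c) = E + c := by
          have h3 : ∑ i, p i * (Real.log (p i) + c)
              = (∑ i, p i * Real.log (p i)) + (∑ i, p i) * c := by
            rw [Finset.sum_mul, ← Finset.sum_add_distrib]
            refine Finset.sum_congr rfl fun i _ => ?_
            ring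
          rw [h3, hTr1, one_mul, hEdef]
        push_cast
        exact_mod_cast h2
      rw [hρH, hexp, Complex.ofReal_re, Complex.ofReal_re, Real.log_exp, hvN]
      ring
end

section
/- Let V_1,…,V_N be nonzero subspaces of EuclideanSpace ℝ (Fin n) with orthogonal projections P_1,…,P_N, and let p_1,…,p_N ∈ [1,∞). Suppose there exists a finite constant C such that for all measurable functions f_j : EuclideanSpace ℝ (Fin n) → [0,∞] (j = 1,…,N): ∫ Π_{j=1}^N f_j(P_j x) dγ_n(x) ≤ C · Π_{j=1}^N ( ∫ f_j(P_j x)^{p_j} dγ_n(x) )^{1/p_j}. Then Σ_{j=1}^N (1/p_j) P_j ≤ I in the Loewner order. -/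
open MeasureTheory
open scoped ENNReal RealInnerProductSpace
open Real

/-- The standard Gaussian probability measure on `EuclideanSpace ℝ (Fin n)`. -/
noncomputable def stdGaussian (n : ℕ) : Measure (EuclideanSpace ℝ (Fin n)) :=
  volume.withDensity
    (fun x => ENNReal.ofReal ((2 * Real.pi) ^ (-(n : ℝ) / 2) * Real.exp (-‖x‖ ^ 2 / 2)))

lemma integrable_exp_gauss {n : ℕ} (w : EuclideanSpace ℝ (Fin n)) :
    Integrable (fun v : EuclideanSpace ℝ (Fin n) =>
      Real.exp (-(1/2) * ‖v‖ ^ 2 + ⟪w, v⟫)) := by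
  have h := GaussianFourier.integrable_cexp_neg_mul_sq_norm_add
    (V := EuclideanSpace ℝ (Fin n)) (b := (1/2 : ℂ)) (by norm_num) 1 w
  have h2 := h.re
  convert h2 using 2 with v
  have : (-(1/2 : ℂ) * (‖v‖ : ℂ) ^ 2 + 1 * (⟪w, v⟫ : ℂ))
      = ((-(1/2) * ‖v‖ ^ 2 + ⟪w, v⟫ : ℝ) : ℂ) := by push_cast; ring
  rw [this]
  exact (Complex.exp_ofReal_re _).symm

lemma integral_exp_gauss {n : ℕ} (w : EuclideanSpace ℝ (Fin n)) :
    ∫ v : EuclideanSpace ℝ (Fin n), Real.exp (-(1/2) * ‖v‖ ^ 2 + ⟪w, v⟫)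
      = (2 * Real.pi) ^ ((n : ℝ) / 2) * Real.exp (‖w‖ ^ 2 / 2) := by
  have h := GaussianFourier.integral_cexp_neg_mul_sq_norm_add
    (V := EuclideanSpace ℝ (Fin n)) (b := (1/2 : ℂ)) (by norm_num) 1 w
  rw [← Complex.ofReal_inj]
  have hcast : ((∫ v : EuclideanSpace ℝ (Fin n), Real.exp (-(1/2) * ‖v‖ ^ 2 + ⟪w, v⟫) : ℝ) : ℂ)
      = ∫ v : EuclideanSpace ℝ (Fin n),
          ((Real.exp (-(1/2) * ‖v‖ ^ 2 + ⟪w, v⟫) : ℝ) : ℂ) := integral_ofReal.symm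
  rw [hcast]
  have heq : ∀ v : EuclideanSpace ℝ (Fin n),
      ((Real.exp (-(1/2) * ‖v‖ ^ 2 + ⟪w, v⟫) : ℝ) : ℂ)
      = Complex.exp (-(1/2 : ℂ) * (‖v‖ : ℂ) ^ 2 + 1 * (⟪w, v⟫ : ℂ)) := by
    intro v; push_cast; ring_nf
  rw [integral_congr_ae (Filter.Eventually.of_forall heq), h,
    finrank_euclideanSpace_fin]
  have h2 : (0:ℝ) ≤ 2 * Real.pi := by positivity
  have e1 : ((Real.pi : ℂ) / (1/2 : ℂ)) = ((2*Real.pi : ℝ) : ℂ) := by push_cast; ring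
  have e2 : ((n:ℂ)/2) = (((n:ℝ)/2 : ℝ) : ℂ) := by push_cast; ring
  have e3 : (1:ℂ)^2 * ((‖w‖:ℝ):ℂ)^2/(4*(1/2)) = ((‖w‖^2/2 : ℝ) : ℂ) := by push_cast; ring
  rw [e1, e2, e3, ← Complex.ofReal_cpow h2, ← Complex.ofReal_exp, ← Complex.ofReal_mul]

lemma lintegral_exp_inner_stdGaussian {n : ℕ} (w : EuclideanSpace ℝ (Fin n)) :
    ∫⁻ v, ENNReal.ofReal (Real.exp ⟪w, v⟫) ∂(stdGaussian n)
      = ENNReal.ofReal (Real.exp (‖w‖ ^ 2 / 2)) := by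
  have hcont : Continuous fun v : EuclideanSpace ℝ (Fin n) => Real.exp ⟪w, v⟫ :=
    Real.continuous_exp.comp (Continuous.inner continuous_const continuous_id)
  have hd : Measurable fun x : EuclideanSpace ℝ (Fin n) =>
      ENNReal.ofReal ((2 * Real.pi) ^ (-(n : ℝ) / 2) * Real.exp (-‖x‖ ^ 2 / 2)) := by
    exact (continuous_const.mul ((Real.continuous_exp.comp
      ((continuous_norm.pow 2).neg.div_const 2)))).measurable.ennreal_ofReal
  rw [stdGaussian, lintegral_withDensity_eq_lintegral_mul _ hd
    hcont.measurable.ennreal_ofReal]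
  have heq : ∀ v : EuclideanSpace ℝ (Fin n),
      ENNReal.ofReal ((2 * Real.pi) ^ (-(n : ℝ) / 2) * Real.exp (-‖v‖ ^ 2 / 2)) *
        ENNReal.ofReal (Real.exp ⟪w, v⟫)
      = ENNReal.ofReal ((2 * Real.pi) ^ (-(n : ℝ) / 2) *
          Real.exp (-(1/2) * ‖v‖ ^ 2 + ⟪w, v⟫)) := by
    intro v
    rw [← ENNReal.ofReal_mul (by positivity), mul_assoc, ← Real.exp_add]
    ring_nf
  simp only [Pi.mul_apply]
  rw [lintegral_congr heq, ← ofReal_integral_eq_lintegral_ofReal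
    (((integrable_exp_gauss w).const_mul _))
    (Filter.Eventually.of_forall fun v => by positivity)]
  rw [integral_const_mul, integral_exp_gauss, ← mul_assoc,
    ← Real.rpow_add (by positivity)]
  rw [show (-(n:ℝ)/2 + (n:ℝ)/2) = 0 by ring, Real.rpow_zero, one_mul]

lemma inner_proj_self {n : ℕ} (K : Submodule ℝ (EuclideanSpace ℝ (Fin n))) (x : EuclideanSpace ℝ (Fin n)) :
    ⟪(K.orthogonalProjection x : EuclideanSpace ℝ (Fin n)), x⟫
      = ‖(K.orthogonalProjection x : EuclideanSpace ℝ (Fin n))‖ ^ 2 := by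
  set P := (K.orthogonalProjection x : EuclideanSpace ℝ (Fin n))
  have h0 : ⟪P, x - P⟫ = 0 :=
    Submodule.inner_right_of_mem_orthogonal (K.orthogonalProjection x).2
      (K.sub_starProjection_mem_orthogonal x)
  have := inner_sub_right (𝕜 := ℝ) P x P
  rw [h0] at this
  rw [← real_inner_self_eq_norm_sq]
  linarith [this.symm]

/-- Necessity of the Loewner condition in the Gaussian Brascamp–Lieb inequality: if a
finite constant `C` makes
`∫ Π_j f_j(P_j x) dγ_n ≤ C · Π_j (∫ f_j(P_j x)^{p_j} dγ_n)^{1/p_j}`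
hold for all measurable `f_j : EuclideanSpace ℝ (Fin n) → [0,∞]`, then
`Σ_j (1/p_j) P_j ≤ I` in the Loewner order. -/
theorem gaussian_brascamp_lieb_necessity {n N : ℕ}
    (V : Fin N → Submodule ℝ (EuclideanSpace ℝ (Fin n)))
    (hV : ∀ j, V j ≠ ⊥)
    (p : Fin N → ℝ) (hp : ∀ j, 1 ≤ p j)
    (C : ℝ≥0∞) (hC : C ≠ ⊤)
    (hBL : ∀ f : ∀ _ : Fin N, EuclideanSpace ℝ (Fin n) → ℝ≥0∞, (∀ j, Measurable (f j)) →
      ∫⁻ x, ∏ j, f j ((V j).orthogonalProjection x : EuclideanSpace ℝ (Fin n))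
          ∂(stdGaussian n) ≤
        C * ∏ j, (∫⁻ x, (f j ((V j).orthogonalProjection x : EuclideanSpace ℝ (Fin n))) ^ (p j)
          ∂(stdGaussian n)) ^ (1 / p j)) :
    ∀ x : EuclideanSpace ℝ (Fin n),
      ∑ j, (1 / p j) * ‖((V j).orthogonalProjection x : EuclideanSpace ℝ (Fin n))‖ ^ 2 ≤
        ‖x‖ ^ 2 := by
  intro x
  have hppos : ∀ j, (0:ℝ) < p j := fun j => lt_of_lt_of_le one_pos (hp j)
  set P : Fin N → EuclideanSpace ℝ (Fin n) → EuclideanSpace ℝ (Fin n) := fun j y => ((V j).orthogonalProjection y : EuclideanSpace ℝ (Fin n)) with hP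
  set u : EuclideanSpace ℝ (Fin n) := ∑ j, (1 / p j) • P j x with hu
  set A : ℝ := ∑ j, (1 / p j) * ‖P j x‖ ^ 2 with hA
  have hux : ⟪u, x⟫ = A := by
    rw [hu, sum_inner, hA]
    refine Finset.sum_congr rfl fun j _ => ?_
    rw [real_inner_smul_left, inner_proj_self]
  have hkey : ∀ t : ℝ, Real.exp (t ^ 2 * ‖u‖ ^ 2 / 2) ≤ C.toReal * Real.exp (t ^ 2 * A / 2) := by
    intro t
    set f : ∀ _ : Fin N, EuclideanSpace ℝ (Fin n) → ℝ≥0∞ :=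
      fun j z => ENNReal.ofReal (Real.exp (t * (1 / p j) * ⟪x, z⟫)) with hf
    have hmeas : ∀ j, Measurable (f j) := by
      intro j
      exact (continuous_const.mul
        (Continuous.inner continuous_const continuous_id)).rexp.measurable.ennreal_ofReal
    have hswap : ∀ j, ∀ y : EuclideanSpace ℝ (Fin n), ⟪x, P j y⟫ = ⟪P j x, y⟫ := by
      intro j y
      exact ((V j).inner_starProjection_left_eq_right x y).symm
    have hBL' := hBL f hmeas
    have hL : (∫⁻ y, ∏ j, f j (P j y) ∂(stdGaussian n))
        = ENNReal.ofReal (Real.exp (t ^ 2 * ‖u‖ ^ 2 / 2)) := by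
      have h1 : ∀ y : EuclideanSpace ℝ (Fin n), ∏ j, f j (P j y) = ENNReal.ofReal (Real.exp ⟪t • u, y⟫) := by
        intro y
        have hsum : ∑ j, t * (1 / p j) * ⟪x, P j y⟫ = ⟪t • u, y⟫ := by
          rw [real_inner_smul_left, hu, sum_inner, Finset.mul_sum]
          refine Finset.sum_congr rfl fun j _ => ?_
          rw [hswap j y, real_inner_smul_left]
          ring
        rw [hf]
        simp only
        rw [← ENNReal.ofReal_prod_of_nonneg (fun j _ => (Real.exp_pos _).le),
          ← Real.exp_sum, hsum]
      rw [lintegral_congr h1, lintegral_exp_inner_stdGaussian]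
      congr 2
      rw [norm_smul, mul_pow, Real.norm_eq_abs, sq_abs]
    have hR : ∀ j, (∫⁻ y, (f j (P j y)) ^ (p j) ∂(stdGaussian n)) ^ (1 / p j)
        = ENNReal.ofReal (Real.exp (t ^ 2 * ‖P j x‖ ^ 2 / 2 * (1 / p j))) := by
      intro j
      have h1 : ∀ y : EuclideanSpace ℝ (Fin n), (f j (P j y)) ^ (p j)
          = ENNReal.ofReal (Real.exp ⟪t • P j x, y⟫) := by
        intro y
        have harg : t * (1 / p j) * ⟪x, P j y⟫ * p j = ⟪t • P j x, y⟫ := by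
          rw [hswap j y, real_inner_smul_left]
          field_simp
          rw [mul_comm t, mul_assoc, mul_div_cancel_left₀ _ (hppos j).ne']
        rw [hf]
        simp only
        rw [ENNReal.ofReal_rpow_of_pos (Real.exp_pos _),
          Real.rpow_def_of_pos (Real.exp_pos _), Real.log_exp, harg]
      rw [lintegral_congr h1, lintegral_exp_inner_stdGaussian,
        ENNReal.ofReal_rpow_of_pos (Real.exp_pos _),
        Real.rpow_def_of_pos (Real.exp_pos _), Real.log_exp]
      congr 2
      rw [norm_smul, mul_pow, Real.norm_eq_abs, sq_abs]
    rw [hL] at hBL'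
    have hprod : (∏ j, (∫⁻ y, (f j (P j y)) ^ (p j) ∂(stdGaussian n)) ^ (1 / p j))
        = ENNReal.ofReal (Real.exp (t ^ 2 * A / 2)) := by
      rw [Finset.prod_congr rfl fun j _ => hR j,
        ← ENNReal.ofReal_prod_of_nonneg (fun j _ => (Real.exp_pos _).le), ← Real.exp_sum]
      refine congrArg _ (congrArg Real.exp ?_)
      rw [hA, Finset.mul_sum, Finset.sum_div]
      refine Finset.sum_congr rfl fun j _ => ?_
      ring
    rw [hprod] at hBL'
    have hfin : C * ENNReal.ofReal (Real.exp (t ^ 2 * A / 2)) ≠ ⊤ :=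
      ENNReal.mul_ne_top hC ENNReal.ofReal_ne_top
    have := ENNReal.toReal_mono hfin hBL'
    rwa [ENNReal.toReal_ofReal (Real.exp_pos _).le, ENNReal.toReal_mul,
      ENNReal.toReal_ofReal (Real.exp_pos _).le] at this
  -- C.toReal ≥ 1
  have hC1 : (1:ℝ) ≤ C.toReal := by
    have := hkey 0
    simpa using this
  -- ‖u‖² ≤ A
  have hBA : ‖u‖ ^ 2 ≤ A := by
    by_contra hlt
    push_neg at hlt
    set δ := ‖u‖ ^ 2 - A with hδ
    have hδpos : 0 < δ := by rw [hδ]; linarith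
    have hlog : 0 ≤ Real.log C.toReal := Real.log_nonneg hC1
    set t := Real.sqrt (2 * (Real.log C.toReal + 1) / δ) with ht
    have ht2 : t ^ 2 = 2 * (Real.log C.toReal + 1) / δ := by
      rw [ht, Real.sq_sqrt]
      positivity
    have hkt := hkey t
    have hexp : Real.exp (t ^ 2 * ‖u‖ ^ 2 / 2)
        = Real.exp (t ^ 2 * A / 2) * (C.toReal * Real.exp 1) := by
      rw [← Real.exp_log (by linarith : (0:ℝ) < C.toReal), ← Real.exp_add, ← Real.exp_add]
      congr 1
      have : t ^ 2 * ‖u‖ ^ 2 / 2 = t ^ 2 * A / 2 + t ^ 2 * δ / 2 := by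
        rw [hδ]; ring
      rw [this, ht2]
      field_simp
    rw [hexp] at hkt
    have he1 : (2:ℝ) ≤ Real.exp 1 := by
      have := Real.add_one_le_exp 1; linarith
    have hA2 : 0 < Real.exp (t ^ 2 * A / 2) := Real.exp_pos _
    have hCpos : (0:ℝ) < C.toReal := by linarith
    nlinarith [hkt, he1, hA2, hC1, mul_pos hCpos hA2]
  -- conclude
  have hcs : A ≤ ‖u‖ * ‖x‖ := by
    rw [← hux]; exact real_inner_le_norm u x
  have hx2 : (0:ℝ) ≤ ‖x‖ ^ 2 := sq_nonneg _
  rcases le_or_gt A 0 with hA0 | hA0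
  · linarith
  · nlinarith [hcs, hBA, norm_nonneg u, norm_nonneg x]
end

section
/- Let V_1,…,V_N be nonzero subspaces of EuclideanSpace ℝ (Fin n) with orthogonal projections P_1,…,P_N, and let p_1,…,p_N ∈ [1,∞). Suppose there exists a finite constant C such that Σ_{j=1}^N (1/p_j) S(E_{V_j} ρ) ≥ S(ρ) − log C holds for every probability density ρ with respect to γ_n for which all the entropies are finite. Then Σ_{j=1}^N (1/p_j) P_j ≤ I in the Loewner order. (One verifies this using the densities ρ_b(x) = exp(⟨b,x⟩ − |b|²/2), for which S(ρ_b) = −|b|²/2 and S(E_{V_j} ρ_b) = −|P_j b|²/2.) -/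
open MeasureTheory

/-- The Gaussian marginal of `ρ` on the subspace `V`:
`(E_V ρ)(x) = ∫ ρ(P_V x + (I - P_V) y) dγ_n(y)`. -/
noncomputable def gMarginal {n : ℕ} (V : Submodule ℝ (EuclideanSpace ℝ (Fin n)))
    (ρ : EuclideanSpace ℝ (Fin n) → ℝ) (x : EuclideanSpace ℝ (Fin n)) : ℝ :=
  ∫ y, ρ ((Submodule.orthogonalProjectionOnto V x : EuclideanSpace ℝ (Fin n)) +
      (y - (Submodule.orthogonalProjectionOnto V y : EuclideanSpace ℝ (Fin n)))) ∂(stdGaussian n)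

/-- The entropy `S(ρ) = -∫ ρ log ρ dγ_n` of a probability density `ρ` with respect to the
standard Gaussian measure. -/
noncomputable def gEntropy {n : ℕ} (ρ : EuclideanSpace ℝ (Fin n) → ℝ) : ℝ :=
  -∫ x, ρ x * Real.log (ρ x) ∂(stdGaussian n)

open Real

variable {n : ℕ}

local notation "E" => EuclideanSpace ℝ (Fin n)

noncomputable def gDen (x : E) : ℝ := (2 * π) ^ (-(n : ℝ) / 2) * exp (-‖x‖ ^ 2 / 2)

lemma gDen_pos (x : E) : 0 < gDen x := by
  unfold gDen; positivity

lemma gDen_cont : Continuous (gDen (n := n)) := by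
  unfold gDen; fun_prop

lemma stdGaussian_eq :
    stdGaussian n = volume.withDensity (fun x => ((gDen x).toNNReal : ENNReal)) := rfl

lemma integral_stdGaussian (f : E → ℝ) :
    ∫ x, f x ∂(stdGaussian n) = ∫ x, gDen x * f x := by
  rw [stdGaussian_eq, integral_withDensity_eq_integral_smul
    (gDen_cont.measurable.real_toNNReal) f]
  congr 1 with x
  simp [NNReal.smul_def, Real.coe_toNNReal _ (gDen_pos x).le]

lemma integrable_stdGaussian_iff (f : E → ℝ) :
    Integrable f (stdGaussian n) ↔ Integrable (fun x => gDen x * f x) := by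
  rw [stdGaussian_eq]
  refine (integrable_withDensity_iff_integrable_smul
    (gDen_cont.measurable.real_toNNReal) (g := f)).trans (integrable_congr ?_)
  filter_upwards with x
  simp [NNReal.smul_def, Real.coe_toNNReal _ (gDen_pos x).le]

open scoped RealInnerProductSpace

lemma complex_arg_eq (w x : E) :
    (-(1/2 : ℂ) * ‖x‖ ^ 2 + 1 * ⟪w, x⟫) = ((-(1/2 : ℝ) * ‖x‖ ^ 2 + ⟪w, x⟫ : ℝ) : ℂ) := by
  push_cast; ring

lemma integral_rexp_quad (w : E) :
    ∫ x : E, exp (-(1/2 : ℝ) * ‖x‖ ^ 2 + ⟪w, x⟫) =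
      (2 * π) ^ ((n : ℝ) / 2) * exp (‖w‖ ^ 2 / 2) := by
  have h := GaussianFourier.integral_cexp_neg_mul_sq_norm_add (V := E) (b := (1/2 : ℂ))
    (by norm_num) 1 w
  rw [finrank_euclideanSpace_fin] at h
  have h2 : ((↑π / (1/2 : ℂ))) ^ ((n : ℂ) / 2) * Complex.exp (1 ^ 2 * ↑‖w‖ ^ 2 / (4 * (1/2 : ℂ)))
      = (((2 * π) ^ ((n : ℝ) / 2) * exp (‖w‖ ^ 2 / 2) : ℝ) : ℂ) := by
    rw [Complex.ofReal_mul, Complex.ofReal_exp, Complex.ofReal_cpow (by positivity)]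
    congr 1
    · push_cast; congr 1; ring
    · congr 1; push_cast; ring
  rw [← Complex.ofReal_inj]
  calc ((∫ x : E, exp (-(1/2 : ℝ) * ‖x‖ ^ 2 + ⟪w, x⟫) : ℝ) : ℂ)
      = Complex.ofRealLI (∫ x : E, exp (-(1/2 : ℝ) * ‖x‖ ^ 2 + ⟪w, x⟫)) := rfl
    _ = ∫ x : E, Complex.ofRealLI (exp (-(1/2 : ℝ) * ‖x‖ ^ 2 + ⟪w, x⟫)) := by
        rw [← Complex.ofRealLI.integral_comp_comm]
    _ = ∫ x : E, Complex.exp (-(1/2 : ℂ) * ‖x‖ ^ 2 + 1 * ⟪w, x⟫) := by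
        congr 1 with x
        rw [complex_arg_eq w x, ← Complex.ofReal_exp]; rfl
    _ = (((2 * π) ^ ((n : ℝ) / 2) * exp (‖w‖ ^ 2 / 2) : ℝ) : ℂ) := by rw [h, h2]

lemma integrable_rexp_quad (w : E) :
    Integrable (fun x : E => exp (-(1/2 : ℝ) * ‖x‖ ^ 2 + ⟪w, x⟫)) := by
  have h := (GaussianFourier.integrable_cexp_neg_mul_sq_norm_add (V := E) (b := (1/2 : ℂ))
    (by norm_num) 1 w).re
  apply h.congr
  filter_upwards with x
  rw [complex_arg_eq w x, ← Complex.ofReal_exp]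
  exact Complex.ofReal_re _

lemma integrable_rexp_negmul {b : ℝ} (hb : 0 < b) :
    Integrable (fun x : E => exp (-b * ‖x‖ ^ 2)) := by
  have h := (GaussianFourier.integrable_cexp_neg_mul_sq_norm_add (V := E) (b := (b : ℂ))
    (by simpa using hb) 0 0).re
  apply h.congr
  filter_upwards with x
  have : (-(b : ℂ) * ‖x‖ ^ 2 + 0 * ⟪(0 : E), x⟫) = ((-b * ‖x‖ ^ 2 : ℝ) : ℂ) := by
    push_cast; ring
  rw [this, ← Complex.ofReal_exp]
  exact Complex.ofReal_re _

lemma key_integrable (b v : E) (c d : ℝ) :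
    Integrable (fun x : E => (⟪b, x⟫ + c) * exp (⟪v, x⟫ + d - ‖x‖ ^ 2 / 2)) := by
  set K := exp (|c| + d + (‖b‖ + ‖v‖) ^ 2) with hK
  have hmeas : AEStronglyMeasurable
      (fun x : E => (⟪b, x⟫ + c) * exp (⟪v, x⟫ + d - ‖x‖ ^ 2 / 2)) volume := by
    apply Continuous.aestronglyMeasurable
    have hb : Continuous fun x : E => ⟪b, x⟫ := continuous_const.inner continuous_id
    have hv : Continuous fun x : E => ⟪v, x⟫ := continuous_const.inner continuous_id
    exact (hb.add continuous_const).mul (Real.continuous_exp.comp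
      ((hv.add continuous_const).sub ((continuous_norm.pow 2).div_const 2)))
  refine Integrable.mono (((integrable_rexp_negmul (n := n) (by norm_num : (0:ℝ) < 1/4)).const_mul K)) hmeas ?_
  filter_upwards with x
  have ht : (0:ℝ) ≤ ‖x‖ := norm_nonneg x
  have hb1 : |⟪b, x⟫| ≤ ‖b‖ * ‖x‖ := abs_real_inner_le_norm b x
  have hv1 : ⟪v, x⟫ ≤ ‖v‖ * ‖x‖ := real_inner_le_norm v x
  have h1 : |⟪b, x⟫ + c| ≤ exp (|⟪b, x⟫| + |c|) := by
    calc |⟪b, x⟫ + c| ≤ |⟪b, x⟫| + |c| := abs_add_le _ _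
      _ ≤ exp (|⟪b, x⟫| + |c|) := by
          have := Real.add_one_le_exp (|⟪b, x⟫| + |c|); linarith
  have h2 : exp (⟪v, x⟫ + d - ‖x‖ ^ 2 / 2) ≤ exp (‖v‖ * ‖x‖ + d - ‖x‖ ^ 2 / 2) := by
    apply exp_le_exp.2; linarith
  rw [Real.norm_eq_abs, abs_mul, abs_of_pos (exp_pos _)]
  calc |⟪b, x⟫ + c| * exp (⟪v, x⟫ + d - ‖x‖ ^ 2 / 2)
      ≤ exp (|⟪b, x⟫| + |c|) * exp (‖v‖ * ‖x‖ + d - ‖x‖ ^ 2 / 2) := by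
        apply mul_le_mul h1 h2 (exp_pos _).le (exp_pos _).le
    _ = exp (|⟪b, x⟫| + |c| + (‖v‖ * ‖x‖ + d - ‖x‖ ^ 2 / 2)) := by rw [← exp_add]
    _ ≤ K * exp (-(1/4) * ‖x‖ ^ 2) := by
        rw [hK, ← exp_add]
        apply exp_le_exp.2
        have hb2 : |⟪b, x⟫| ≤ ‖b‖ * ‖x‖ := hb1
        nlinarith [sq_nonneg (‖x‖ / 2 - (‖b‖ + ‖v‖)), sq_nonneg (‖b‖ + ‖v‖)]
    _ ≤ ‖K * exp (-(1/4) * ‖x‖ ^ 2)‖ := le_abs_self _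

lemma gDen_mul_exp (w : E) (c : ℝ) (x : E) :
    gDen x * exp (⟪w, x⟫ + c) =
      (2 * π) ^ (-(n : ℝ) / 2) * exp c * exp (-(1/2 : ℝ) * ‖x‖ ^ 2 + ⟪w, x⟫) := by
  unfold gDen
  rw [mul_assoc, mul_assoc, ← exp_add, ← exp_add]
  ring_nf

lemma rpow_cancel : (2 * π) ^ (-(n : ℝ) / 2) * (2 * π) ^ ((n : ℝ) / 2) = 1 := by
  rw [← Real.rpow_add (by positivity), show (-(n:ℝ)/2 + n/2) = 0 by ring, Real.rpow_zero]

lemma integral_exp_inner_gauss (w : E) (c : ℝ) :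
    ∫ x, exp (⟪w, x⟫ + c) ∂(stdGaussian n) = exp (‖w‖ ^ 2 / 2 + c) := by
  rw [integral_stdGaussian]
  simp_rw [gDen_mul_exp w c]
  rw [integral_const_mul, integral_rexp_quad, exp_add]
  have := rpow_cancel (n := n)
  linear_combination exp c * exp (‖w‖ ^ 2 / 2) * this

lemma integrable_exp_inner_gauss (w : E) (c : ℝ) :
    Integrable (fun x => exp (⟪w, x⟫ + c)) (stdGaussian n) := by
  rw [integrable_stdGaussian_iff]
  simp_rw [gDen_mul_exp w c]
  exact (integrable_rexp_quad w).const_mul _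

lemma integral_inner_exp_zero (w : E) :
    ∫ x : E, ⟪w, x⟫ * exp (-(1/2 : ℝ) * ‖x‖ ^ 2) = 0 := by
  have h := integral_neg_eq_self (fun y : E => ⟪w, y⟫ * exp (-(1/2 : ℝ) * ‖y‖ ^ 2)) volume
  have hodd : ∀ y : E, ⟪w, -y⟫ * exp (-(1/2 : ℝ) * ‖-y‖ ^ 2) =
      -(⟪w, y⟫ * exp (-(1/2 : ℝ) * ‖y‖ ^ 2)) := by
    intro y; rw [inner_neg_right, norm_neg]; ring
  simp only [hodd] at h
  rw [integral_neg] at h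
  linarith

lemma integral_gauss_one' : ∫ x : E, exp (-(1/2 : ℝ) * ‖x‖ ^ 2) = (2 * π) ^ ((n : ℝ) / 2) := by
  have h := integral_rexp_quad (0 : E)
  simpa using h

lemma integral_inner_mul_exp_quad (w : E) :
    ∫ x : E, ⟪w, x⟫ * exp (-(1/2 : ℝ) * ‖x‖ ^ 2 + ⟪w, x⟫) =
      (2 * π) ^ ((n : ℝ) / 2) * (‖w‖ ^ 2 * exp (‖w‖ ^ 2 / 2)) := by
  have hpt : ∀ x : E, ⟪w, x⟫ * exp (-(1/2 : ℝ) * ‖x‖ ^ 2 + ⟪w, x⟫) =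
      exp (‖w‖ ^ 2 / 2) * (⟪w, x⟫ * exp (-(1/2 : ℝ) * ‖x - w‖ ^ 2)) := by
    intro x
    rw [show -(1/2 : ℝ) * ‖x - w‖ ^ 2 =
      (-(1/2 : ℝ) * ‖x‖ ^ 2 + ⟪w, x⟫) - ‖w‖ ^ 2 / 2 by
        rw [norm_sub_sq_real, real_inner_comm x w]; ring]
    rw [exp_sub]
    field_simp [exp_ne_zero]
  simp_rw [hpt]
  rw [integral_const_mul]
  have hshift := integral_add_right_eq_self (μ := volume)
    (fun x : E => ⟪w, x⟫ * exp (-(1/2 : ℝ) * ‖x - w‖ ^ 2)) w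
  simp only [add_sub_cancel_right, inner_add_right, real_inner_self_eq_norm_sq] at hshift
  rw [← hshift]
  have hint1 : Integrable (fun y : E => ⟪w, y⟫ * exp (-(1/2 : ℝ) * ‖y‖ ^ 2)) := by
    have h := key_integrable w 0 0 0
    apply h.congr
    filter_upwards with y
    simp only [inner_zero_left, add_zero, zero_add]
    congr 1
    congr 1
    ring
  have hint2 : Integrable (fun y : E => ‖w‖ ^ 2 * exp (-(1/2 : ℝ) * ‖y‖ ^ 2)) :=
    (integrable_rexp_negmul (by norm_num : (0:ℝ) < 1/2)).const_mul _
  have : (fun y : E => (⟪w, y⟫ + ‖w‖ ^ 2) * exp (-(1/2 : ℝ) * ‖y‖ ^ 2)) =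
      fun y : E => ⟪w, y⟫ * exp (-(1/2 : ℝ) * ‖y‖ ^ 2) +
        ‖w‖ ^ 2 * exp (-(1/2 : ℝ) * ‖y‖ ^ 2) := by
    funext y; ring
  rw [this, integral_add hint1 hint2, integral_inner_exp_zero, integral_const_mul,
    integral_gauss_one']
  ring

lemma integrable_inner_mul_exp_gauss (w v : E) (e c : ℝ) :
    Integrable (fun x => (⟪w, x⟫ + e) * exp (⟪v, x⟫ + c)) (stdGaussian n) := by
  rw [integrable_stdGaussian_iff]
  have hpt : ∀ x : E, gDen x * ((⟪w, x⟫ + e) * exp (⟪v, x⟫ + c)) =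
      (2 * π) ^ (-(n : ℝ) / 2) * ((⟪w, x⟫ + e) * exp (⟪v, x⟫ + c - ‖x‖ ^ 2 / 2)) := by
    intro x; unfold gDen
    rw [show ⟪v, x⟫ + c - ‖x‖ ^ 2 / 2 = (-‖x‖ ^ 2 / 2) + (⟪v, x⟫ + c) by ring]
    simp only [exp_add]
    ring
  simp_rw [hpt]
  exact (key_integrable w v e c).const_mul _

lemma integral_inner_mul_exp_gauss (w : E) (c : ℝ) :
    ∫ x, ⟪w, x⟫ * exp (⟪w, x⟫ + c) ∂(stdGaussian n) = ‖w‖ ^ 2 * exp (‖w‖ ^ 2 / 2 + c) := by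
  rw [integral_stdGaussian]
  have hpt : ∀ x : E, gDen x * (⟪w, x⟫ * exp (⟪w, x⟫ + c)) =
      (2 * π) ^ (-(n : ℝ) / 2) * exp c * (⟪w, x⟫ * exp (-(1/2 : ℝ) * ‖x‖ ^ 2 + ⟪w, x⟫)) := by
    intro x; unfold gDen
    rw [show (-(1/2 : ℝ) * ‖x‖ ^ 2 + ⟪w, x⟫) = (-‖x‖ ^ 2 / 2) + ⟪w, x⟫ by ring]
    simp only [exp_add]
    ring
  simp_rw [hpt]
  rw [integral_const_mul, integral_inner_mul_exp_quad]
  have := rpow_cancel (n := n)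
  rw [exp_add]
  linear_combination (‖w‖ ^ 2 * exp (‖w‖ ^ 2 / 2) * exp c) * this

noncomputable def rhoB (b : E) (x : E) : ℝ := exp (⟪b, x⟫ + -(‖b‖ ^ 2 / 2))

lemma rhoB_meas (b : E) : Measurable (rhoB b) := by
  have hb : Continuous fun x : E => ⟪b, x⟫ := continuous_const.inner continuous_id
  exact (Real.continuous_exp.comp (hb.add continuous_const)).measurable

lemma rhoB_nonneg (b : E) (x : E) : 0 ≤ rhoB b x := (exp_pos _).le

lemma rhoB_int_one (b : E) : ∫ x, rhoB b x ∂(stdGaussian n) = 1 := by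
  unfold rhoB
  rw [integral_exp_inner_gauss b (-(‖b‖ ^ 2 / 2))]
  simp

lemma rhoB_mul_log (b : E) (x : E) :
    rhoB b x * log (rhoB b x) = (⟪b, x⟫ + -(‖b‖ ^ 2 / 2)) * rhoB b x := by
  unfold rhoB
  rw [log_exp]
  ring

lemma rhoB_ent_integrable (b : E) :
    Integrable (fun x => rhoB b x * log (rhoB b x)) (stdGaussian n) := by
  simp_rw [rhoB_mul_log]
  exact integrable_inner_mul_exp_gauss b b (-(‖b‖ ^ 2 / 2)) (-(‖b‖ ^ 2 / 2))

lemma rhoB_entropy (b : E) : gEntropy (rhoB b) = -(‖b‖ ^ 2 / 2) := by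
  unfold gEntropy
  have hpt : ∀ x : E, rhoB b x * log (rhoB b x) =
      ⟪b, x⟫ * exp (⟪b, x⟫ + -(‖b‖ ^ 2 / 2)) -
      (‖b‖ ^ 2 / 2) * exp (⟪b, x⟫ + -(‖b‖ ^ 2 / 2)) := by
    intro x; rw [rhoB_mul_log]; unfold rhoB; ring
  simp_rw [hpt]
  have hint1 : Integrable (fun x => ⟪b, x⟫ * exp (⟪b, x⟫ + -(‖b‖ ^ 2 / 2))) (stdGaussian n) := by
    have h := integrable_inner_mul_exp_gauss b b 0 (-(‖b‖ ^ 2 / 2))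
    simpa using h
  have hint2 : Integrable (fun x => (‖b‖ ^ 2 / 2) * exp (⟪b, x⟫ + -(‖b‖ ^ 2 / 2)))
      (stdGaussian n) := (integrable_exp_inner_gauss b _).const_mul _
  rw [integral_sub hint1 hint2, integral_inner_mul_exp_gauss, integral_const_mul,
    integral_exp_inner_gauss]
  simp
  ring

lemma marginal_rhoB (W : Submodule ℝ E) (b : E) :
    gMarginal W (rhoB b) = rhoB (Submodule.orthogonalProjectionOnto W b : E) := by
  funext x
  unfold gMarginal rhoB
  have hpt : ∀ y : E, exp (⟪b, (Submodule.orthogonalProjectionOnto W x : E) +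
      (y - (Submodule.orthogonalProjectionOnto W y : E))⟫ + -(‖b‖ ^ 2 / 2)) =
      exp (⟪b - (Submodule.orthogonalProjectionOnto W b : E), y⟫ +
        (⟪(Submodule.orthogonalProjectionOnto W b : E), x⟫ + -(‖b‖ ^ 2 / 2))) := by
    intro y
    congr 1
    rw [inner_add_right, inner_sub_right, inner_sub_left,
      ← (show ⟪(Submodule.orthogonalProjectionOnto W b : E), x⟫ = ⟪b, (Submodule.orthogonalProjectionOnto W x : E)⟫ from W.inner_starProjection_left_eq_right b x),
      ← (show ⟪(Submodule.orthogonalProjectionOnto W b : E), y⟫ = ⟪b, (Submodule.orthogonalProjectionOnto W y : E)⟫ from W.inner_starProjection_left_eq_right b y)]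
    ring
  simp_rw [hpt]
  rw [integral_exp_inner_gauss]
  have hortho : ⟪((Submodule.orthogonalProjectionOnto W b : E)), b - (Submodule.orthogonalProjectionOnto W b : E)⟫ = 0 :=
    Submodule.inner_right_of_mem_orthogonal (Submodule.orthogonalProjectionOnto W b).2
      (W.sub_starProjection_mem_orthogonal b)
  have hpyth : ‖b‖ ^ 2 = ‖(Submodule.orthogonalProjectionOnto W b : E)‖ ^ 2 +
      ‖b - (Submodule.orthogonalProjectionOnto W b : E)‖ ^ 2 := by
    have h := norm_add_sq_real ((Submodule.orthogonalProjectionOnto W b : E))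
      (b - (Submodule.orthogonalProjectionOnto W b : E))
    rw [hortho] at h
    simpa using h
  congr 1
  rw [real_inner_comm]
  linarith [hpyth]

/-- Necessity of the Loewner condition in the Gaussian subadditivity of entropy: if some
finite constant `C` makes `Σ_j (1/p_j) S(E_{V_j} ρ) ≥ S(ρ) - log C` hold for every
probability density `ρ` with respect to `γ_n` whose entropy integrands are integrable, then
`Σ_j (1/p_j) P_j ≤ I` in the Loewner order. -/
theorem gaussian_subadditivity_necessity {n N : ℕ}
    (V : Fin N → Submodule ℝ (EuclideanSpace ℝ (Fin n)))
    (hV : ∀ j, V j ≠ ⊥)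
    (p : Fin N → ℝ) (hp : ∀ j, 1 ≤ p j)
    (C : ℝ) (hC : 0 < C)
    (hSA : ∀ ρ : EuclideanSpace ℝ (Fin n) → ℝ, Measurable ρ → (∀ x, 0 ≤ ρ x) →
      (∫ x, ρ x ∂(stdGaussian n) = 1) →
      Integrable (fun x => ρ x * Real.log (ρ x)) (stdGaussian n) →
      (∀ j, Integrable
        (fun x => gMarginal (V j) ρ x * Real.log (gMarginal (V j) ρ x)) (stdGaussian n)) →
      ∑ j, (1 / p j) * gEntropy (gMarginal (V j) ρ) ≥ gEntropy ρ - Real.log C) :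
    ∀ x : EuclideanSpace ℝ (Fin n),
      ∑ j, (1 / p j) * ‖(Submodule.orthogonalProjectionOnto (V j) x : EuclideanSpace ℝ (Fin n))‖ ^ 2 ≤
        ‖x‖ ^ 2 := by
  intro b
  set S := ∑ j, (1 / p j) *
    ‖(Submodule.orthogonalProjectionOnto (V j) b : EuclideanSpace ℝ (Fin n))‖ ^ 2 with hS
  clear_value S
  have key : ∀ k : ℕ, S ≤ ‖b‖ ^ 2 + 2 * Real.log C / ((k : ℝ) + 1) ^ 2 := by
    intro k
    set t : ℝ := (k : ℝ) + 1 with ht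
    have ht0 : 0 < t := by positivity
    clear_value t
    have h := hSA (rhoB (t • b)) (rhoB_meas _) (rhoB_nonneg _) (rhoB_int_one _)
      (rhoB_ent_integrable _)
      (fun j => by rw [marginal_rhoB]; exact rhoB_ent_integrable _)
    rw [rhoB_entropy] at h
    have hproj : ∀ j, (Submodule.orthogonalProjectionOnto (V j) (t • b) : EuclideanSpace ℝ (Fin n)) =
        t • (Submodule.orthogonalProjectionOnto (V j) b : EuclideanSpace ℝ (Fin n)) := by
      intro j; rw [_root_.map_smul]; rfl
    have hmarg : ∀ j, gEntropy (gMarginal (V j) (rhoB (t • b))) =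
        -(t ^ 2 * ‖(Submodule.orthogonalProjectionOnto (V j) b : EuclideanSpace ℝ (Fin n))‖ ^ 2 / 2) := by
      intro j
      rw [marginal_rhoB, rhoB_entropy, hproj j, norm_smul, Real.norm_eq_abs, mul_pow, sq_abs]
    rw [Finset.sum_congr rfl (fun j _ => by rw [hmarg j])] at h
    have hsum : ∑ j, (1 / p j) *
        -(t ^ 2 * ‖(Submodule.orthogonalProjectionOnto (V j) b : EuclideanSpace ℝ (Fin n))‖ ^ 2 / 2) =
        -(t ^ 2 / 2) * S := by
      rw [hS, Finset.mul_sum]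
      exact Finset.sum_congr rfl (fun j _ => by ring)
    rw [hsum] at h
    have hnorm : ‖t • b‖ ^ 2 = t ^ 2 * ‖b‖ ^ 2 := by
      rw [norm_smul, Real.norm_eq_abs, mul_pow, sq_abs]
    rw [hnorm] at h
    have h2 : t ^ 2 * S ≤ t ^ 2 * ‖b‖ ^ 2 + 2 * Real.log C := by nlinarith [h, sq_nonneg t]
    have h4 : t ^ 2 * (‖b‖ ^ 2 + 2 * Real.log C / t ^ 2) = t ^ 2 * ‖b‖ ^ 2 + 2 * Real.log C := by
      field_simp
    exact (mul_le_mul_iff_of_pos_left (pow_pos ht0 2)).1 (by linarith [h2, h4])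
  have h1 : Filter.Tendsto (fun k : ℕ => ((k : ℝ) + 1) ^ 2) Filter.atTop Filter.atTop :=
    (Filter.tendsto_pow_atTop two_ne_zero).comp
      (Filter.tendsto_atTop_add_const_right _ 1 tendsto_natCast_atTop_atTop)
  have h2 := Filter.Tendsto.div_atTop
    (tendsto_const_nhds (x := 2 * Real.log C) (f := Filter.atTop (α := ℕ))) h1
  have hlim : Filter.Tendsto (fun k : ℕ => ‖b‖ ^ 2 + 2 * Real.log C / ((k : ℝ) + 1) ^ 2)
      Filter.atTop (nhds (‖b‖ ^ 2)) := by
    simpa using (tendsto_const_nhds (x := ‖b‖ ^ 2)).add h2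
  exact ge_of_tendsto' hlim key
end

section
/- Let P_1,…,P_N be orthogonal projections onto subspaces of EuclideanSpace ℝ (Fin n) and let p_1,…,p_N ∈ [1,∞) satisfy Σ_{j=1}^N (1/p_j) P_j ≤ I in the Loewner order. Then for every a with ‖a‖ < 1: Σ_{j=1}^N (1/p_j) · ‖P_j a‖² / (1 − ‖P_j a‖²) ≤ ‖a‖² / (1 − ‖a‖²). -/
private lemma geom_expand {c r : ℝ} (hr0 : 0 ≤ r) (hr1 : r < 1) :
    c * (r / (1 - r)) = ∑' k : ℕ, c * r ^ (k + 1) := by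
  have h := tsum_geometric_of_lt_one hr0 hr1
  have : ∑' k : ℕ, c * r ^ (k + 1) = (c * r) * ∑' k : ℕ, r ^ k := by
    rw [← tsum_mul_left]
    congr 1; funext k; ring
  rw [this, h, div_eq_mul_inv]; ring

private lemma aux_real {N : ℕ} (c r : Fin N → ℝ) (s : ℝ)
    (hc : ∀ j, 0 ≤ c j) (hr0 : ∀ j, 0 ≤ r j) (hrs : ∀ j, r j ≤ s)
    (hs0 : 0 ≤ s) (hs : s < 1) (hsum : ∑ j, c j * r j ≤ s) :
    ∑ j, c j * (r j / (1 - r j)) ≤ s / (1 - s) := by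
  have hr1 : ∀ j, r j < 1 := fun j => lt_of_le_of_lt (hrs j) hs
  have hsummable : ∀ j, Summable (fun k : ℕ => c j * r j ^ (k + 1)) := by
    intro j
    have : Summable (fun k : ℕ => r j ^ k) :=
      summable_geometric_of_lt_one (hr0 j) (hr1 j)
    have h2 : Summable (fun k : ℕ => (c j * r j) * r j ^ k) := this.mul_left _
    refine h2.congr fun k => by ring
  have hssum : Summable (fun k : ℕ => s ^ (k + 1)) := by
    have : Summable (fun k : ℕ => s ^ k) := summable_geometric_of_lt_one hs0 hs
    refine (this.mul_left s).congr fun k => by ring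
  calc ∑ j, c j * (r j / (1 - r j))
      = ∑ j, ∑' k : ℕ, c j * r j ^ (k + 1) := by
        refine Finset.sum_congr rfl fun j _ => geom_expand (hr0 j) (hr1 j)
    _ = ∑' k : ℕ, ∑ j, c j * r j ^ (k + 1) :=
        (Summable.tsum_finsetSum (fun j _ => hsummable j)).symm
    _ ≤ ∑' k : ℕ, s ^ (k + 1) := by
        refine Summable.tsum_le_tsum (fun k => ?_) ?_ hssum
        · calc ∑ j, c j * r j ^ (k + 1)
              ≤ ∑ j, (c j * r j) * s ^ k := by
                refine Finset.sum_le_sum fun j _ => ?_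
                have : r j ^ (k + 1) ≤ r j * s ^ k := by
                  calc r j ^ (k + 1) = r j * r j ^ k := by ring
                    _ ≤ r j * s ^ k := by
                        exact mul_le_mul_of_nonneg_left
                          (pow_le_pow_left₀ (hr0 j) (hrs j) k) (hr0 j)
                calc c j * r j ^ (k + 1) ≤ c j * (r j * s ^ k) :=
                      mul_le_mul_of_nonneg_left this (hc j)
                  _ = (c j * r j) * s ^ k := by ring
          _ = (∑ j, c j * r j) * s ^ k := by rw [← Finset.sum_mul]
          _ ≤ s * s ^ k :=
              mul_le_mul_of_nonneg_right hsum (pow_nonneg hs0 k)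
          _ = s ^ (k + 1) := by ring
        · exact summable_sum fun j _ => hsummable j
    _ = s / (1 - s) := by
        have := geom_expand (c := 1) hs0 hs
        simpa using this.symm

/-- If the orthogonal projections `P_j` onto the subspaces `V_j` satisfy
`Σ_j (1/p_j) P_j ≤ I` in the Loewner order, then for every `a` with `‖a‖ < 1`,
`Σ_j (1/p_j) ‖P_j a‖² / (1 - ‖P_j a‖²) ≤ ‖a‖² / (1 - ‖a‖²)`. -/
theorem rational_subadditivity {n N : ℕ}
    (V : Fin N → Submodule ℝ (EuclideanSpace ℝ (Fin n)))
    (p : Fin N → ℝ) (hp : ∀ j, 1 ≤ p j)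
    (hLoewner : ∀ x : EuclideanSpace ℝ (Fin n),
      ∑ j, (1 / p j) * ‖((V j).orthogonalProjection x : EuclideanSpace ℝ (Fin n))‖ ^ 2 ≤
        ‖x‖ ^ 2)
    (a : EuclideanSpace ℝ (Fin n)) (ha : ‖a‖ < 1) :
    ∑ j, (1 / p j) *
        (‖((V j).orthogonalProjection a : EuclideanSpace ℝ (Fin n))‖ ^ 2 /
          (1 - ‖((V j).orthogonalProjection a : EuclideanSpace ℝ (Fin n))‖ ^ 2)) ≤
      ‖a‖ ^ 2 / (1 - ‖a‖ ^ 2) := by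
  have hPa : ∀ j, ‖((V j).orthogonalProjection a : EuclideanSpace ℝ (Fin n))‖ ≤ ‖a‖ := by
    intro j
    calc ‖((V j).orthogonalProjection a : EuclideanSpace ℝ (Fin n))‖
        ≤ ‖(V j).orthogonalProjection‖ * ‖a‖ := by
          simpa using ((V j).orthogonalProjection).le_opNorm a
      _ ≤ 1 * ‖a‖ := by
          exact mul_le_mul_of_nonneg_right (Submodule.orthogonalProjection_norm_le _) (norm_nonneg a)
      _ = ‖a‖ := one_mul _
  refine aux_real (fun j => 1 / p j)
    (fun j => ‖((V j).orthogonalProjection a : EuclideanSpace ℝ (Fin n))‖ ^ 2)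
    (‖a‖ ^ 2) (fun j => div_nonneg zero_le_one (zero_le_one.trans (hp j))) (fun j => by positivity)
    (fun j => pow_le_pow_left₀ (norm_nonneg _) (hPa j) 2)
    (by positivity) ?_ (hLoewner a)
  calc ‖a‖ ^ 2 < 1 ^ 2 := by
        exact pow_lt_pow_left₀ ha (norm_nonneg a) two_ne_zero
    _ = 1 := one_pow 2
end

section
/- Let u_1,…,u_N be unit vectors in EuclideanSpace ℝ (Fin n) and let p_1,…,p_N ∈ [1,∞) be such that Σ_{j=1}^N (1/p_j) (u_j ⊗ u_j) ≤ I in the Loewner order, where u_j ⊗ u_j denotes the orthogonal projection onto the span of u_j (the rank-one map x ↦ ⟨u_j, x⟩ u_j). Then for every b = (b_1,…,b_N) ∈ ℝ^N: log cosh( ‖Σ_{j=1}^N b_j u_j‖ ) ≤ Σ_{j=1}^N (1/p_j) · log cosh(p_j b_j). -/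
open scoped RealInnerProductSpace
open Real

/-- derivative of log ∘ cosh is tanh -/
lemma hasDerivAt_logcosh (x : ℝ) :
    HasDerivAt (fun x => Real.log (Real.cosh x)) (Real.tanh x) x := by
  have h := (Real.hasDerivAt_cosh x).log (Real.cosh_pos x).ne'
  simpa [Real.tanh_eq_sinh_div_cosh] using h

lemma hasDerivAt_tanh (x : ℝ) :
    HasDerivAt Real.tanh (1 / Real.cosh x ^ 2) x := by
  have h := (Real.hasDerivAt_sinh x).div (Real.hasDerivAt_cosh x) (Real.cosh_pos x).ne'
  have h2 : (Real.cosh x * Real.cosh x - Real.sinh x * Real.sinh x) / Real.cosh x ^ 2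
      = 1 / Real.cosh x ^ 2 := by
    rw [show Real.cosh x * Real.cosh x - Real.sinh x * Real.sinh x
        = Real.cosh x ^ 2 - Real.sinh x ^ 2 by ring, Real.cosh_sq_sub_sinh_sq]
  rw [h2] at h
  have : (fun x => Real.sinh x / Real.cosh x) = Real.tanh := by
    funext y; rw [Real.tanh_eq_sinh_div_cosh]
  rw [← this]; exact h

lemma tanh_formula (x : ℝ) : Real.tanh x = 1 - 2 / (Real.exp (2*x) + 1) := by
  have h2 : Real.exp (2*x) = Real.exp x * Real.exp x := by rw [two_mul, Real.exp_add]
  have hx := Real.exp_pos x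
  have hc := Real.cosh_pos x
  rw [Real.tanh_eq_sinh_div_cosh, Real.sinh_eq, Real.cosh_eq, Real.exp_neg]
  rw [Real.cosh_eq, Real.exp_neg] at hc
  field_simp
  nlinarith [hx, h2]

lemma tanh_monotone : Monotone Real.tanh := by
  intro x y hxy
  rw [tanh_formula, tanh_formula]
  have h1 : (0:ℝ) < Real.exp (2*x) + 1 := by positivity
  have hle : Real.exp (2*x) + 1 ≤ Real.exp (2*y) + 1 :=
    add_le_add_left (Real.exp_le_exp.2 (by linarith)) 1
  have := div_le_div_of_nonneg_left (by norm_num : (0:ℝ) ≤ 2) h1 hle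
  linarith

lemma convexOn_logcosh : ConvexOn ℝ Set.univ (fun x => Real.log (Real.cosh x)) := by
  apply Monotone.convexOn_univ_of_deriv (fun x => (hasDerivAt_logcosh x).differentiableAt)
  have : deriv (fun x => Real.log (Real.cosh x)) = Real.tanh := by
    funext x; exact (hasDerivAt_logcosh x).deriv
  rw [this]; exact tanh_monotone

lemma logcosh_nonneg (x : ℝ) : 0 ≤ Real.log (Real.cosh x) :=
  Real.log_nonneg (Real.one_le_cosh x)

/-- Lemma A : s·tanh s ≤ 2 log cosh s -/
lemma lemA (s : ℝ) : s * Real.tanh s ≤ 2 * Real.log (Real.cosh s) := by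
  have key : ∀ t : ℝ, 0 ≤ t → t * Real.tanh t ≤ 2 * Real.log (Real.cosh t) := by
    intro t ht
    set F : ℝ → ℝ := fun s => 2 * Real.log (Real.cosh s) - s * Real.tanh s with hF
    have hder : ∀ s : ℝ, HasDerivAt F
        (2 * Real.tanh s - (Real.tanh s + s * (1 / Real.cosh s ^ 2))) s := by
      intro s
      have h := ((hasDerivAt_logcosh s).const_mul 2).sub
        ((hasDerivAt_id s).mul (hasDerivAt_tanh s))
      exact h.congr_deriv (by simp)
    have hmono : MonotoneOn F (Set.Ici (0:ℝ)) := by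
      apply monotoneOn_of_deriv_nonneg (convex_Ici 0)
      · exact fun s _ => (hder s).differentiableAt.continuousAt.continuousWithinAt
      · exact fun s _ => (hder s).differentiableAt.differentiableWithinAt
      · intro s hs
        rw [interior_Ici] at hs
        rw [(hder s).deriv]
        have hs0 : 0 < s := hs
        have h1 : Real.tanh s - s / Real.cosh s ^ 2
            = (Real.sinh s * Real.cosh s - s) / Real.cosh s ^ 2 := by
          rw [Real.tanh_eq_sinh_div_cosh]
          field_simp
        have h2 : s ≤ Real.sinh s * Real.cosh s := by
          have := Real.self_le_sinh_iff.2 hs0.le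
          nlinarith [Real.one_le_cosh s, Real.sinh_pos_iff.2 hs0]
        have h3 : (0:ℝ) < Real.cosh s ^ 2 := by positivity
        have h4 : 0 ≤ Real.tanh s - s / Real.cosh s ^ 2 := by
          rw [h1]; exact div_nonneg (by linarith) h3.le
        have e : s * (1 / Real.cosh s ^ 2) = s / Real.cosh s ^ 2 := by ring
        rw [e]
        linarith
    have h0 : F 0 = 0 := by simp [hF]
    have := hmono (Set.self_mem_Ici) (Set.mem_Ici.2 ht) ht
    rw [h0] at this
    simp only [hF] at this
    linarith
  rcases le_or_gt 0 s with h | h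
  · exact key s h
  · have := key (-s) (by linarith)
    rw [Real.tanh_neg, Real.cosh_neg] at this
    linarith [this]

/-- Lemma B core : for 0 < c ≤ 1, c² log cosh(a/c) ≤ log cosh a -/
lemma lemB_core (a : ℝ) {c : ℝ} (hc : 0 < c) (hc1 : c ≤ 1) :
    c ^ 2 * Real.log (Real.cosh (a / c)) ≤ Real.log (Real.cosh a) := by
  set g : ℝ → ℝ := fun t => t ^ 2 * Real.log (Real.cosh (a / t)) with hg
  have hder : ∀ t : ℝ, t ≠ 0 → HasDerivAt g
      (2 * t * Real.log (Real.cosh (a / t))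
        + t ^ 2 * (Real.tanh (a / t) * (-(a / t ^ 2)))) t := by
    intro t ht
    have h1 : HasDerivAt (fun t : ℝ => a / t) (-(a / t ^ 2)) t := by
      have h0 := (hasDerivAt_const t a).div (hasDerivAt_id t) ht
      simp only [id_eq] at h0
      have e : (0 * t - a * 1) / t ^ 2 = -(a / t ^ 2) := by ring
      rwa [e] at h0
    have h2 : HasDerivAt (fun t : ℝ => Real.log (Real.cosh (a / t)))
        (Real.tanh (a / t) * (-(a / t ^ 2))) t :=
      (hasDerivAt_logcosh (a / t)).comp t h1
    have h3 : HasDerivAt (fun t : ℝ => t ^ 2) (2 * t) t := by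
      simpa using hasDerivAt_pow 2 t
    exact h3.mul h2
  have hmono : MonotoneOn g (Set.Icc c 1) := by
    apply monotoneOn_of_deriv_nonneg (convex_Icc c 1)
    · intro t ht
      have ht0 : t ≠ 0 := by have := ht.1; intro h; rw [h] at this; linarith
      exact (hder t ht0).differentiableAt.continuousAt.continuousWithinAt
    · intro t ht
      rw [interior_Icc] at ht
      have ht0 : t ≠ 0 := by have := ht.1; intro h; rw [h] at this; linarith
      exact (hder t ht0).differentiableAt.differentiableWithinAt
    · intro t ht
      rw [interior_Icc] at ht
      have ht0 : 0 < t := lt_trans hc ht.1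
      rw [(hder t ht0.ne').deriv]
      have key : 2 * t * Real.log (Real.cosh (a / t))
          + t ^ 2 * (Real.tanh (a / t) * (-(a / t ^ 2)))
          = t * (2 * Real.log (Real.cosh (a / t)) - (a / t) * Real.tanh (a / t)) := by
        field_simp
        ring
      rw [key]
      have := lemA (a / t)
      have h2 : 0 ≤ 2 * Real.log (Real.cosh (a / t)) - (a / t) * Real.tanh (a / t) := by
        linarith
      positivity
  have := hmono (Set.mem_Icc.2 ⟨le_refl c, hc1⟩) (Set.mem_Icc.2 ⟨hc1, le_refl 1⟩) hc1
  simpa [hg] using this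

/-- Lemma B : for c ≠ 0, |c| ≤ 1, c² log cosh(a/c) ≤ log cosh a -/
lemma lemB (a : ℝ) {c : ℝ} (hc : c ≠ 0) (hc1 : |c| ≤ 1) :
    c ^ 2 * Real.log (Real.cosh (a / c)) ≤ Real.log (Real.cosh a) := by
  rcases hc.lt_or_gt with h | h
  · have := lemB_core (-a) (c := -c) (by linarith) (by rw [abs_of_neg h] at hc1; linarith)
    rw [neg_div_neg_eq] at this
    rw [Real.cosh_neg] at this
    simpa using this
  · exact lemB_core a h (by rwa [abs_of_pos h] at hc1)

/-- Jensen with subprobability weights -/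
lemma jensen_logcosh {N : ℕ} (w y : Fin N → ℝ) (hw : ∀ j, 0 ≤ w j) (hw1 : ∑ j, w j ≤ 1) :
    Real.log (Real.cosh (∑ j, w j * y j)) ≤ ∑ j, w j * Real.log (Real.cosh (y j)) := by
  set W : Fin (N+1) → ℝ := Fin.cons (1 - ∑ j, w j) w with hW
  set Y : Fin (N+1) → ℝ := Fin.cons 0 y with hY
  have hsum : ∑ i, W i = 1 := by
    rw [Fin.sum_univ_succ]
    simp [hW]
  have h := convexOn_logcosh.map_sum_le (t := Finset.univ) (w := W) (p := Y)
    (fun i _ => ?_) hsum (fun i _ => Set.mem_univ _)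
  · rw [Fin.sum_univ_succ, Fin.sum_univ_succ] at h
    simp only [hW, hY, Fin.cons_zero, Fin.cons_succ, smul_eq_mul, mul_zero,
      Real.cosh_zero, Real.log_one, zero_add, add_zero] at h
    convert h using 2
  · induction i using Fin.cases with
    | zero => simp only [hW, Fin.cons_zero]; linarith
    | succ j => simp only [hW, Fin.cons_succ]; exact hw j

/-- One-dimensional Brascamp–Lieb inequality for the hyperbolic cosine: if the unit vectors
`u_j` and exponents `p_j ∈ [1,∞)` satisfy `Σ_j (1/p_j) u_j ⊗ u_j ≤ I` in the Loewner order
(i.e. `Σ_j (1/p_j) ⟪u_j, x⟫² ≤ ‖x‖²` for all `x`), then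
`log cosh ‖Σ_j b_j u_j‖ ≤ Σ_j (1/p_j) log cosh (p_j b_j)` for all `b ∈ ℝ^N`. -/
theorem log_cosh_brascamp_lieb {n N : ℕ}
    (u : Fin N → EuclideanSpace ℝ (Fin n)) (hu : ∀ j, ‖u j‖ = 1)
    (p : Fin N → ℝ) (hp : ∀ j, 1 ≤ p j)
    (hLoewner : ∀ x : EuclideanSpace ℝ (Fin n),
      ∑ j, (1 / p j) * ⟪u j, x⟫ ^ 2 ≤ ‖x‖ ^ 2)
    (b : Fin N → ℝ) :
    Real.log (Real.cosh ‖∑ j, b j • u j‖) ≤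
      ∑ j, (1 / p j) * Real.log (Real.cosh (p j * b j)) := by
  have hp0 : ∀ j, 0 < p j := fun j => lt_of_lt_of_le one_pos (hp j)
  by_cases hS : (∑ j, b j • u j) = 0
  · rw [hS]
    simp only [norm_zero, Real.cosh_zero, Real.log_one]
    exact Finset.sum_nonneg fun j _ =>
      mul_nonneg (one_div_nonneg.2 (hp0 j).le) (logcosh_nonneg _)
  · set S : EuclideanSpace ℝ (Fin n) := ∑ j, b j • u j with hSdef
    have hSn : 0 < ‖S‖ := norm_pos_iff.2 hS
    set x : EuclideanSpace ℝ (Fin n) := ‖S‖⁻¹ • S with hx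
    have hxn : ‖x‖ = 1 := by
      rw [hx, norm_smul, norm_inv, norm_norm, inv_mul_cancel₀ hSn.ne']
    set c : Fin N → ℝ := fun j => ⟪u j, x⟫ with hc
    have hkey1 : ∑ j, b j * c j = ‖S‖ := by
      have h1 : ∑ j, b j * c j = ⟪S, x⟫ := by
        rw [hSdef, sum_inner]
        exact Finset.sum_congr rfl fun j _ => (real_inner_smul_left _ _ _).symm
      rw [h1, hx, real_inner_smul_right, real_inner_self_eq_norm_sq, sq,
        inv_mul_cancel_left₀ hSn.ne']
    have hkey2 : ∑ j, (1 / p j) * c j ^ 2 ≤ 1 := by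
      have h2 := hLoewner x
      rw [hxn] at h2
      simpa using h2
    have hcle : ∀ j, |c j| ≤ 1 := by
      intro j
      have h3 := abs_real_inner_le_norm (u j) x
      rw [hu j, hxn] at h3
      simpa using h3
    set w : Fin N → ℝ := fun j => (1 / p j) * c j ^ 2 with hw
    set y : Fin N → ℝ := fun j => if c j = 0 then 0 else (p j * b j) / c j with hy
    have hwnn : ∀ j, 0 ≤ w j := fun j =>
      mul_nonneg (one_div_nonneg.2 (hp0 j).le) (sq_nonneg _)
    have hsum_eq : ∑ j, w j * y j = ∑ j, b j * c j := by
      apply Finset.sum_congr rfl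
      intro j _
      by_cases h : c j = 0
      · simp [hw, hy, h]
      · have hpj : p j ≠ 0 := (hp0 j).ne'
        simp only [hw, hy, if_neg h]
        field_simp
    have hJ := jensen_logcosh w y hwnn hkey2
    rw [hsum_eq, hkey1] at hJ
    refine hJ.trans (Finset.sum_le_sum fun j _ => ?_)
    by_cases h : c j = 0
    · simp only [hw, hy, if_pos h, h, Real.cosh_zero, Real.log_one, mul_zero]
      have : (0:ℝ) ≤ (1 / p j) * Real.log (Real.cosh (p j * b j)) :=
        mul_nonneg (one_div_nonneg.2 (hp0 j).le) (logcosh_nonneg _)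
      simpa using this
    · simp only [hw, hy, if_neg h]
      have hB := lemB (p j * b j) h (hcle j)
      calc (1 / p j) * c j ^ 2 * Real.log (Real.cosh ((p j * b j) / c j))
          = (1 / p j) * (c j ^ 2 * Real.log (Real.cosh ((p j * b j) / c j))) := by ring
        _ ≤ (1 / p j) * Real.log (Real.cosh (p j * b j)) :=
          mul_le_mul_of_nonneg_left hB (one_div_nonneg.2 (hp0 j).le)
end
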